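/- arXiv:1706.03678 — 5 statements merged into one kernel-verified Lean document; each statement's English description precedes it below -/
import Mathlib

section
/- Let X_1, …, X_n ∈ S, Y_1, …, Y_n ∈ ℝ, let g : S → ℝ, and let A be a set of real-valued functions on S. Suppose f̂ ∈ A satisfies (1/n)Σ_{i=1}^n (f̂(X_i) − Y_i)² ≤ (1/n)Σ_{i=1}^n (f(X_i) − Y_i)² for all f ∈ A. Then for every f ∈ A, (1/n)Σ_{i=1}^n (f̂(X_i) − f(X_i))² ≤ (4/n)Σ_{i=1}^n (Y_i − g(X_i))(f̂(X_i) − f(X_i)) + (4/n)Σ_{i=1}^n (f(X_i) − g(X_i))². -/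
open scoped BigOperators

theorem ivanov_basic_inequality {S : Type*} (n : ℕ) (hn : 0 < n)
    (X : Fin n → S) (Y : Fin n → ℝ) (g : S → ℝ)
    (A : Set (S → ℝ)) (fhat : S → ℝ) (hfhatA : fhat ∈ A)
    (hmin : ∀ f ∈ A, (1 / n : ℝ) * ∑ i, (fhat (X i) - Y i)^2 ≤
      (1 / n : ℝ) * ∑ i, (f (X i) - Y i)^2)
    (f : S → ℝ) (hf : f ∈ A) :
    (1 / n : ℝ) * ∑ i, (fhat (X i) - f (X i))^2 ≤
      (4 / n : ℝ) * ∑ i, (Y i - g (X i)) * (fhat (X i) - f (X i)) +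
      (4 / n : ℝ) * ∑ i, (f (X i) - g (X i))^2 := by
  have hn' : (0:ℝ) < n := by exact_mod_cast hn
  have hD : (∑ i, (fhat (X i) - Y i)^2) ≤ ∑ i, (f (X i) - Y i)^2 := by
    have h := hmin f hf
    have hpos : (0:ℝ) < 1/n := by positivity
    exact (mul_le_mul_iff_right₀ hpos).mp h
  have hpt : ∀ i : Fin n, (fhat (X i) - f (X i))^2 ≤
      2*((fhat (X i) - Y i)^2 - (f (X i) - Y i)^2)
      + 4*((Y i - g (X i)) * (fhat (X i) - f (X i)))
      + 4*(f (X i) - g (X i))^2 := by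
    intro i
    nlinarith [sq_nonneg (fhat (X i) - f (X i) + 2*(f (X i) - g (X i)))]
  have hsum : (∑ i, (fhat (X i) - f (X i))^2) ≤
      4*(∑ i, (Y i - g (X i)) * (fhat (X i) - f (X i)))
      + 4*(∑ i, (f (X i) - g (X i))^2) := by
    calc (∑ i, (fhat (X i) - f (X i))^2)
        ≤ ∑ i, (2*((fhat (X i) - Y i)^2 - (f (X i) - Y i)^2)
          + 4*((Y i - g (X i)) * (fhat (X i) - f (X i)))
          + 4*(f (X i) - g (X i))^2) := Finset.sum_le_sum fun i _ => hpt i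
      _ = 2*((∑ i, (fhat (X i) - Y i)^2) - ∑ i, (f (X i) - Y i)^2)
          + 4*(∑ i, (Y i - g (X i)) * (fhat (X i) - f (X i)))
          + 4*(∑ i, (f (X i) - g (X i))^2) := by
          simp [Finset.sum_add_distrib, Finset.mul_sum, Finset.sum_sub_distrib, mul_sub]
      _ ≤ 4*(∑ i, (Y i - g (X i)) * (fhat (X i) - f (X i)))
          + 4*(∑ i, (f (X i) - g (X i))^2) := by nlinarith
  calc (1 / n : ℝ) * ∑ i, (fhat (X i) - f (X i))^2
      ≤ (1 / n : ℝ) * (4*(∑ i, (Y i - g (X i)) * (fhat (X i) - f (X i)))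
        + 4*(∑ i, (f (X i) - g (X i))^2)) :=
        mul_le_mul_of_nonneg_left hsum (by positivity)
    _ = (4 / n : ℝ) * ∑ i, (Y i - g (X i)) * (fhat (X i) - f (X i)) +
        (4 / n : ℝ) * ∑ i, (f (X i) - g (X i))^2 := by ring
end

section
/- Let ε_1, …, ε_n be real random variables on (Ω, ℱ, ℙ) such that, writing X = (X_1, …, X_n), E(ε_i | X) = 0 almost surely, Var(ε_i | X) ≤ σ² almost surely for 1 ≤ i ≤ n, and Cov(ε_i, ε_j | X) = 0 almost surely for i ≠ j. Then E( sup_{f ∈ rB_H} | (1/n) Σ_{i=1}^n ε_i f(X_i) | ) ≤ ‖k‖_∞ σ r / n^{1/2} for every r > 0. -/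
open MeasureTheory ProbabilityTheory Real
open scoped BigOperators

noncomputable def ev {S H : Type*} [NormedAddCommGroup H] [InnerProductSpace ℝ H]
    (Φ : S → H) (f : H) (x : S) : ℝ := inner ℝ f (Φ x)

lemma pullout_aux {Ω : Type*} {mΩ : MeasurableSpace Ω} {μ : Measure Ω} [IsProbabilityMeasure μ]
    {m : MeasurableSpace Ω} (hm : m ≤ mΩ) {g e : Ω → ℝ}
    (hg_m : StronglyMeasurable[m] g) {C : ℝ} (hbd : ∀ ω, ‖g ω‖ ≤ C)
    (he : Integrable e μ) :
    ∫ ω, g ω * e ω ∂μ = ∫ ω, g ω * (μ[e|m]) ω ∂μ := by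
  haveI : SigmaFinite (μ.trim hm) := (isFiniteMeasure_trim hm).toSigmaFinite
  have hg : AEStronglyMeasurable[mΩ] g μ := ((hg_m.mono hm).aestronglyMeasurable)
  have h1 : Integrable (g * e) μ := he.bdd_mul hg (Filter.Eventually.of_forall hbd)
  have h2 := condExp_mul_of_stronglyMeasurable_left (μ := μ) hg_m h1 he
  calc ∫ ω, g ω * e ω ∂μ = ∫ ω, (g * e) ω ∂μ := rfl
    _ = ∫ ω, (μ[g * e|m]) ω ∂μ := (integral_condExp hm (f := g * e)).symm
    _ = ∫ ω, g ω * (μ[e|m]) ω ∂μ := integral_congr_ae (h2.mono fun ω hω => hω)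

theorem empirical_process_ball_bound
    (Ω : Type*) [MeasurableSpace Ω] (μ : Measure Ω) [IsProbabilityMeasure μ]
    (S : Type*) [MeasurableSpace S] (P : Measure S) [IsProbabilityMeasure P]
    (H : Type*) [NormedAddCommGroup H] [InnerProductSpace ℝ H]
    [SecondCountableTopology H] [MeasurableSpace H] [BorelSpace H]
    (Φ : S → H) (κ : ℝ) (hκ0 : 0 ≤ κ) (hκ : ∀ x, ‖Φ x‖ ≤ κ)
    (hkmeas : Measurable fun p : S × S => (inner ℝ (Φ p.1) (Φ p.2) : ℝ))
    (n : ℕ) (hn : 0 < n)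
    (X : Fin n → Ω → S) (hXm : ∀ i, Measurable (X i))
    (hiid : iIndepFun X μ)
    (hPX : ∀ i, Measure.map (X i) μ = P)
    (ε : Fin n → Ω → ℝ) (hεm : ∀ i, Measurable (ε i))
    (hεint1 : ∀ i, Integrable (ε i) μ)
    (hεint2 : ∀ i, Integrable (fun ω => (ε i ω)^2) μ)
    (hεintc : ∀ i j, Integrable (fun ω => ε i ω * ε j ω) μ)
    (σ : ℝ) (hσ : 0 ≤ σ)
    (hcond0 : ∀ i, μ[ε i | MeasurableSpace.comap (fun ω (j : Fin n) => X j ω) inferInstance] =ᵐ[μ] 0)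
    (hcondvar : ∀ i, ∀ᵐ ω ∂μ,
      (μ[fun ω' => (ε i ω')^2 | MeasurableSpace.comap (fun ω (j : Fin n) => X j ω) inferInstance]) ω ≤ σ^2)
    (hcondcov : ∀ i j, i ≠ j →
      μ[fun ω' => ε i ω' * ε j ω' | MeasurableSpace.comap (fun ω (j : Fin n) => X j ω) inferInstance] =ᵐ[μ] 0)
    (r : ℝ) (hr : 0 < r) :
    ∫ ω, (⨆ f : Metric.closedBall (0 : H) r, |(1 / n : ℝ) * ∑ i, ε i ω * ev Φ (f : H) (X i ω)|) ∂μ ≤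
      κ * σ * r / Real.sqrt (n : ℝ) := by
  classical
  have hTm : Measurable (fun ω (j : Fin n) => X j ω) := measurable_pi_lambda _ hXm
  have hm : MeasurableSpace.comap (fun ω (j : Fin n) => X j ω) inferInstance
      ≤ ‹MeasurableSpace Ω› := hTm.comap_le
  have hnR : (0:ℝ) < n := by exact_mod_cast hn
  set V : Ω → H := fun ω => (n : ℝ)⁻¹ • ∑ i, ε i ω • Φ (X i ω) with hV_def
  set g : Fin n → Fin n → Ω → ℝ :=
    fun i j ω => (inner ℝ (Φ (X i ω)) (Φ (X j ω)) : ℝ) with hg_def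
  have hXi_m : ∀ i, Measurable[MeasurableSpace.comap (fun ω (j : Fin n) => X j ω) inferInstance]
      (X i) := by
    intro i
    refine Measurable.of_comap_le ?_
    calc MeasurableSpace.comap (X i) inferInstance
        = MeasurableSpace.comap (fun ω (j : Fin n) => X j ω)
            (MeasurableSpace.comap (fun v : Fin n → S => v i) inferInstance) := by
          rw [show X i = (fun v : Fin n → S => v i) ∘ (fun ω (j : Fin n) => X j ω) from rfl,
            MeasurableSpace.comap_comp]
      _ ≤ MeasurableSpace.comap (fun ω (j : Fin n) => X j ω) inferInstance :=
          MeasurableSpace.comap_mono (measurable_pi_apply i).comap_le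
  have hg_m : ∀ i j,
      StronglyMeasurable[MeasurableSpace.comap (fun ω (j : Fin n) => X j ω) inferInstance]
        (g i j) := fun i j =>
    (hkmeas.comp ((hXi_m i).prodMk (hXi_m j))).stronglyMeasurable
  have hg_meas : ∀ i j, Measurable (g i j) := fun i j =>
    hkmeas.comp ((hXm i).prodMk (hXm j))
  have hg_bdd : ∀ i j ω, ‖g i j ω‖ ≤ κ^2 := by
    intro i j ω
    calc ‖g i j ω‖ = |(inner ℝ (Φ (X i ω)) (Φ (X j ω)) : ℝ)| := rfl
      _ ≤ ‖Φ (X i ω)‖ * ‖Φ (X j ω)‖ := abs_real_inner_le_norm _ _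
      _ ≤ κ * κ := mul_le_mul (hκ _) (hκ _) (norm_nonneg _) hκ0
      _ = κ^2 := (sq κ).symm
  have hTint : ∀ i j, Integrable (fun ω => g i j ω * (ε i ω * ε j ω)) μ := fun i j =>
    (hεintc i j).bdd_mul ((hg_meas i j).aestronglyMeasurable) (Filter.Eventually.of_forall (hg_bdd i j))
  have key : ∀ i j, ∫ ω, g i j ω * (ε i ω * ε j ω) ∂μ
      = ∫ ω, g i j ω * (μ[fun ω' => ε i ω' * ε j ω' |
          MeasurableSpace.comap (fun ω (j : Fin n) => X j ω) inferInstance]) ω ∂μ :=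
    fun i j => pullout_aux hm (hg_m i j) (hg_bdd i j) (hεintc i j)
  have key_ne : ∀ i j, i ≠ j → ∫ ω, g i j ω * (ε i ω * ε j ω) ∂μ = 0 := by
    intro i j hij
    rw [key i j]
    refine integral_eq_zero_of_ae ?_
    filter_upwards [hcondcov i j hij] with ω hω
    simp [hω]
  have key_eq : ∀ i, ∫ ω, g i i ω * (ε i ω * ε i ω) ∂μ ≤ κ^2 * σ^2 := by
    intro i
    have hsq : (fun ω' => ε i ω' * ε i ω') = fun ω' => (ε i ω')^2 := by
      funext ω'; ring
    rw [key i i, hsq]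
    have hce_int : Integrable (fun ω => g i i ω *
        (μ[fun ω' => (ε i ω')^2 |
          MeasurableSpace.comap (fun ω (j : Fin n) => X j ω) inferInstance]) ω) μ :=
      (integrable_condExp).bdd_mul ((hg_meas i i).aestronglyMeasurable) (Filter.Eventually.of_forall (hg_bdd i i))
    have hce_nonneg : ∀ᵐ ω ∂μ, 0 ≤ (μ[fun ω' => (ε i ω')^2 |
        MeasurableSpace.comap (fun ω (j : Fin n) => X j ω) inferInstance]) ω :=
      condExp_nonneg (Filter.Eventually.of_forall fun ω => sq_nonneg _)
    calc ∫ ω, g i i ω * (μ[fun ω' => (ε i ω')^2 |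
          MeasurableSpace.comap (fun ω (j : Fin n) => X j ω) inferInstance]) ω ∂μ
        ≤ ∫ _ω, κ^2 * σ^2 ∂μ := by
          refine integral_mono_ae hce_int (integrable_const _) ?_
          filter_upwards [hce_nonneg, hcondvar i] with ω h0 h1
          have hg0 : 0 ≤ g i i ω := real_inner_self_nonneg
          have hgκ : g i i ω ≤ κ^2 := (le_abs_self _).trans (hg_bdd i i ω)
          exact mul_le_mul hgκ h1 h0 (sq_nonneg κ)
      _ = κ^2 * σ^2 := by simp
  have hNsq : ∀ ω, ‖V ω‖^2 = (n:ℝ)⁻¹^2 * ∑ i, ∑ j, g i j ω * (ε i ω * ε j ω) := by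
    intro ω
    rw [← real_inner_self_eq_norm_sq]
    show (inner ℝ ((n:ℝ)⁻¹ • ∑ i, ε i ω • Φ (X i ω)) ((n:ℝ)⁻¹ • ∑ j, ε j ω • Φ (X j ω)) : ℝ) = _
    rw [real_inner_smul_left, real_inner_smul_right, sum_inner]
    simp_rw [inner_sum, real_inner_smul_left, real_inner_smul_right]
    rw [sq, mul_assoc]
    congr 1
    congr 1
    refine Finset.sum_congr rfl fun i _ => Finset.sum_congr rfl fun j _ => ?_
    simp only [hg_def]
    ring
  have hNsqInt : Integrable (fun ω => ‖V ω‖^2) μ := by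
    have heq : (fun ω => ‖V ω‖^2)
        = fun ω => (n:ℝ)⁻¹^2 * ∑ i, ∑ j, g i j ω * (ε i ω * ε j ω) := funext hNsq
    rw [heq]
    exact (integrable_finset_sum _ fun i _ => integrable_finset_sum _ fun j _ =>
      hTint i j).const_mul _
  have hInt2 : ∫ ω, ‖V ω‖^2 ∂μ ≤ κ^2 * σ^2 / n := by
    have h1 : ∫ ω, ‖V ω‖^2 ∂μ
        = (n:ℝ)⁻¹^2 * ∑ i, ∑ j, ∫ ω, g i j ω * (ε i ω * ε j ω) ∂μ := by
      simp_rw [hNsq]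
      rw [integral_const_mul, integral_finset_sum _ fun i _ =>
        integrable_finset_sum _ fun j _ => hTint i j]
      congr 1
      exact Finset.sum_congr rfl fun i _ =>
        integral_finset_sum _ fun j _ => hTint i j
    rw [h1]
    have h2 : ∀ i, ∑ j, ∫ ω, g i j ω * (ε i ω * ε j ω) ∂μ ≤ κ^2 * σ^2 := by
      intro i
      rw [Finset.sum_eq_single i (fun j _ hj => key_ne i j (Ne.symm hj)) (by simp)]
      exact key_eq i
    calc (n:ℝ)⁻¹^2 * ∑ i, ∑ j, ∫ ω, g i j ω * (ε i ω * ε j ω) ∂μ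
        ≤ (n:ℝ)⁻¹^2 * ∑ _i : Fin n, κ^2 * σ^2 := by
          refine mul_le_mul_of_nonneg_left (Finset.sum_le_sum fun i _ => h2 i)
            (by positivity)
      _ = κ^2 * σ^2 / n := by
          rw [Finset.sum_const, Finset.card_univ, Fintype.card_fin]
          field_simp
          ring
  have hVn_meas : AEStronglyMeasurable (fun ω => ‖V ω‖) μ := by
    have heq : (fun ω => ‖V ω‖)
        = fun ω => Real.sqrt ((n:ℝ)⁻¹^2 * ∑ i, ∑ j, g i j ω * (ε i ω * ε j ω)) := by
      funext ω; rw [← hNsq, Real.sqrt_sq (norm_nonneg _)]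
    rw [heq]
    refine (Measurable.sqrt ?_).aestronglyMeasurable
    exact (Finset.measurable_sum _ fun i _ => Finset.measurable_sum _ fun j _ =>
      (hg_meas i j).mul ((hεm i).mul (hεm j))).const_mul _
  have hVn_int : Integrable (fun ω => ‖V ω‖) μ := by
    refine Integrable.mono' ((integrable_const 1).add hNsqInt) hVn_meas ?_
    refine Filter.Eventually.of_forall fun ω => ?_
    rw [Real.norm_eq_abs, abs_of_nonneg (norm_nonneg _)]
    simp only [Pi.add_apply]
    nlinarith [norm_nonneg (V ω), sq_nonneg (‖V ω‖ - 1)]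
  have hCS : ∫ ω, ‖V ω‖ ∂μ ≤ Real.sqrt (κ^2 * σ^2 / n) := by
    have hmem : MemLp (fun ω => ‖V ω‖) 2 μ :=
      (memLp_two_iff_integrable_sq hVn_meas).2 hNsqInt
    have hvar := variance_nonneg (fun ω => ‖V ω‖) μ
    rw [variance_eq_sub hmem] at hvar
    have hpoweq : μ[(fun ω => ‖V ω‖)^2] = ∫ ω, ‖V ω‖^2 ∂μ := by
      congr 1
    have hsq : (∫ ω, ‖V ω‖ ∂μ)^2 ≤ ∫ ω, ‖V ω‖^2 ∂μ := by
      rw [hpoweq] at hvar; linarith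
    have h0 : 0 ≤ ∫ ω, ‖V ω‖ ∂μ := integral_nonneg fun ω => norm_nonneg _
    have := Real.sqrt_le_sqrt (hsq.trans hInt2)
    rwa [Real.sqrt_sq h0] at this
  have hball : (0 : H) ∈ Metric.closedBall (0 : H) r := by simpa using hr.le
  have hbdd : ∀ ω, ∀ f : Metric.closedBall (0 : H) r,
      |(1 / n : ℝ) * ∑ i, ε i ω * ev Φ (f : H) (X i ω)| ≤ r * ‖V ω‖ := by
    intro ω f
    have hf : ‖(f : H)‖ ≤ r := by
      have := f.2
      rwa [Metric.mem_closedBall, dist_zero_right] at this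
    have hinner : (1 / n : ℝ) * ∑ i, ε i ω * ev Φ (f : H) (X i ω)
        = (inner ℝ (f : H) (V ω) : ℝ) := by
      simp only [hV_def, real_inner_smul_right, inner_sum, ev, one_div]
    rw [hinner]
    calc |(inner ℝ (f : H) (V ω) : ℝ)| ≤ ‖(f : H)‖ * ‖V ω‖ := abs_real_inner_le_norm _ _
      _ ≤ r * ‖V ω‖ := mul_le_mul_of_nonneg_right hf (norm_nonneg _)
  have hsup : ∀ ω, (⨆ f : Metric.closedBall (0 : H) r,
      |(1 / n : ℝ) * ∑ i, ε i ω * ev Φ (f : H) (X i ω)|) ≤ r * ‖V ω‖ := by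
    intro ω
    haveI : Nonempty (Metric.closedBall (0 : H) r) := ⟨⟨0, hball⟩⟩
    exact ciSup_le (hbdd ω)
  have hsup0 : ∀ ω, 0 ≤ (⨆ f : Metric.closedBall (0 : H) r,
      |(1 / n : ℝ) * ∑ i, ε i ω * ev Φ (f : H) (X i ω)|) := by
    intro ω
    have hb : BddAbove (Set.range fun f : Metric.closedBall (0 : H) r =>
        |(1 / n : ℝ) * ∑ i, ε i ω * ev Φ (f : H) (X i ω)|) := by
      refine ⟨r * ‖V ω‖, ?_⟩
      rintro x ⟨f, rfl⟩
      exact hbdd ω f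
    have h0 := le_ciSup hb ⟨0, hball⟩
    refine le_trans ?_ h0
    simp [ev]
  calc ∫ ω, (⨆ f : Metric.closedBall (0 : H) r,
        |(1 / n : ℝ) * ∑ i, ε i ω * ev Φ (f : H) (X i ω)|) ∂μ
      ≤ ∫ ω, r * ‖V ω‖ ∂μ := by
        refine integral_mono_of_nonneg (Filter.Eventually.of_forall hsup0)
          (hVn_int.const_mul r) (Filter.Eventually.of_forall hsup)
    _ = r * ∫ ω, ‖V ω‖ ∂μ := integral_const_mul _ _
    _ ≤ r * Real.sqrt (κ^2 * σ^2 / n) := mul_le_mul_of_nonneg_left hCS hr.le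
    _ = κ * σ * r / Real.sqrt (n : ℝ) := by
        rw [show κ^2 * σ^2 / n = (κ*σ)^2 / n by ring, Real.sqrt_div (sq_nonneg _),
          Real.sqrt_sq (mul_nonneg hκ0 hσ)]
        ring
end

section
/- Assume (H) and (Y1). Let r > 0 and h_r ∈ rB_H. Then E( ‖ĥ_r − h_r‖²_{L²(P_n)} ) ≤ 4‖k‖_∞ σ r / n^{1/2} + 4‖h_r − g‖²_{L²(P)}. -/
open MeasureTheory ProbabilityTheory Real
open scoped BigOperators

lemma measurable_inner_phi {S H : Type*} [MeasurableSpace S] [NormedAddCommGroup H]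
    [InnerProductSpace ℝ H] (Φ : S → H)
    (hkmeas : Measurable fun p : S × S => (inner ℝ (Φ p.1) (Φ p.2) : ℝ)) (h : H) :
    Measurable fun x => (inner ℝ h (Φ x) : ℝ) := by
  set K := Submodule.span ℝ (Set.range Φ) with hK
  have hmeasK : ∀ u ∈ K, Measurable fun x => (inner ℝ u (Φ x) : ℝ) := by
    intro u hu
    induction hu using Submodule.span_induction with
    | mem y hy =>
      obtain ⟨z, rfl⟩ := hy
      exact hkmeas.comp (measurable_const.prodMk measurable_id)
    | zero => simpa using measurable_const
    | add x y hx hy hx' hy' => simp only [inner_add_left]; exact hx'.add hy'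
    | smul a x hx hx' => simpa [real_inner_smul_left] using hx'.const_mul a
  set α := Metric.infDist h (K : Set H) with hα
  have hKne : (K : Set H).Nonempty := ⟨0, K.zero_mem⟩
  have hα0 : 0 ≤ α := Metric.infDist_nonneg
  have hex : ∀ m : ℕ, ∃ u, u ∈ K ∧ dist h u < Real.sqrt (α ^ 2 + 1 / (m + 1)) := by
    intro m
    have hlt : α < Real.sqrt (α ^ 2 + 1 / (m + 1)) := by
      rw [show α = Real.sqrt (α ^ 2) from (Real.sqrt_sq hα0).symm]
      apply Real.sqrt_lt_sqrt (sq_nonneg _)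
      have h1 : (0:ℝ) < 1 / (m + 1) := by positivity
      nlinarith [Real.sq_sqrt (sq_nonneg α), Real.sqrt_sq hα0]
    obtain ⟨y, hyK, hyd⟩ := (Metric.infDist_lt_iff hKne).mp hlt
    exact ⟨y, hyK, hyd⟩
  choose u huK hud using hex
  have key : ∀ (m : ℕ) (x : S),
      (inner ℝ (h - u m) (Φ x) : ℝ) ^ 2 ≤ (1 / (m + 1)) * ‖Φ x‖ ^ 2 := by
    intro m x
    have hw2 : ‖h - u m‖ ^ 2 < α ^ 2 + 1 / (m + 1) := by
      have h1 : dist h (u m) = ‖h - u m‖ := dist_eq_norm _ _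
      have h2 := hud m
      rw [h1] at h2
      have h3 : ‖h - u m‖ ^ 2 < (Real.sqrt (α ^ 2 + 1 / (m + 1))) ^ 2 := by
        apply sq_lt_sq' _ h2
        have := norm_nonneg (h - u m)
        linarith [Real.sqrt_nonneg (α ^ 2 + 1 / (m + 1))]
      rwa [Real.sq_sqrt (by positivity)] at h3
    have hproj : ∀ t : ℝ, α ^ 2 ≤ ‖(h - u m) - t • Φ x‖ ^ 2 := by
      intro t
      have hmem : u m + t • Φ x ∈ K :=
        K.add_mem (huK m) (K.smul_mem t (Submodule.subset_span ⟨x, rfl⟩))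
      have h1 : α ≤ dist h (u m + t • Φ x) := Metric.infDist_le_dist_of_mem hmem
      have h2 : dist h (u m + t • Φ x) = ‖(h - u m) - t • Φ x‖ := by
        rw [dist_eq_norm, sub_add_eq_sub_sub]
      rw [h2] at h1
      nlinarith [norm_nonneg ((h - u m) - t • Φ x)]
    by_cases hv : Φ x = 0
    · simp [hv]
    · have hvn : (0:ℝ) < ‖Φ x‖ ^ 2 := pow_pos (norm_pos_iff.mpr hv) 2
      set w := h - u m with hwdef
      set I := (inner ℝ w (Φ x) : ℝ) with hI
      set V := ‖Φ x‖ ^ 2 with hV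
      set t := I / V with ht
      have htV : t * V = I := by rw [ht]; field_simp
      have hexp : ‖w - t • Φ x‖ ^ 2 = ‖w‖ ^ 2 - 2 * t * I + t ^ 2 * V := by
        rw [norm_sub_sq_real, real_inner_smul_right, norm_smul, hV]
        simp [mul_pow, sq_abs]
        ring
      have hthis := hproj t
      rw [hexp] at hthis
      have hkey : I ^ 2 ≤ (‖w‖ ^ 2 - α ^ 2) * V := by
        nlinarith [mul_le_mul_of_nonneg_right hthis (le_of_lt hvn), htV, sq_nonneg I]
      nlinarith [hkey, hw2, hvn]
  have htend : ∀ x, Filter.Tendsto (fun m => (inner ℝ (u m) (Φ x) : ℝ))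
      Filter.atTop (nhds (inner ℝ h (Φ x) : ℝ)) := by
    intro x
    have hd : ∀ m, |(inner ℝ h (Φ x) : ℝ) - inner ℝ (u m) (Φ x)|
        ≤ Real.sqrt (1 / (m + 1)) * ‖Φ x‖ := by
      intro m
      have h1 : (inner ℝ h (Φ x) : ℝ) - inner ℝ (u m) (Φ x) = inner ℝ (h - u m) (Φ x) := by
        rw [inner_sub_left]
      rw [h1]
      have h2 := key m x
      have h3 : |(inner ℝ (h - u m) (Φ x) : ℝ)| = Real.sqrt ((inner ℝ (h - u m) (Φ x) : ℝ) ^ 2) := by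
        rw [Real.sqrt_sq_eq_abs]
      rw [h3]
      calc Real.sqrt ((inner ℝ (h - u m) (Φ x) : ℝ) ^ 2)
          ≤ Real.sqrt ((1 / (m + 1)) * ‖Φ x‖ ^ 2) := Real.sqrt_le_sqrt h2
        _ = Real.sqrt (1 / (m + 1)) * ‖Φ x‖ := by
            rw [Real.sqrt_mul (by positivity), Real.sqrt_sq (norm_nonneg _)]
    have hz : Filter.Tendsto (fun m : ℕ => Real.sqrt (1 / (m + 1)) * ‖Φ x‖)
        Filter.atTop (nhds 0) := by
      have h1 : Filter.Tendsto (fun m : ℕ => (1 : ℝ) / (m + 1)) Filter.atTop (nhds 0) :=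
        tendsto_one_div_add_atTop_nhds_zero_nat
      have h2 := (Real.continuous_sqrt.tendsto 0).comp h1
      rw [Real.sqrt_zero] at h2
      simpa using h2.mul_const ‖Φ x‖
    have : Filter.Tendsto (fun m => (inner ℝ h (Φ x) : ℝ) - inner ℝ (u m) (Φ x))
        Filter.atTop (nhds 0) := by
      apply squeeze_zero_norm (fun m => by simpa using hd m) hz
    have h5 := (tendsto_const_nhds (x := (inner ℝ h (Φ x) : ℝ))).sub this
    simpa using h5
  exact measurable_of_tendsto_metrizable (fun m => hmeasK (u m) (huK m))
    (tendsto_pi_nhds.mpr htend)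

set_option maxHeartbeats 1000000

theorem expected_empirical_norm_bound
    (Ω : Type*) [MeasurableSpace Ω] (μ : Measure Ω) [IsProbabilityMeasure μ]
    (S : Type*) [MeasurableSpace S] (P : Measure S) [IsProbabilityMeasure P]
    (H : Type*) [NormedAddCommGroup H] [InnerProductSpace ℝ H]
    [SecondCountableTopology H] [MeasurableSpace H] [BorelSpace H]
    (Φ : S → H) (κ : ℝ) (hκ0 : 0 ≤ κ) (hκ : ∀ x, ‖Φ x‖ ≤ κ)
    (hkmeas : Measurable fun p : S × S => (inner ℝ (Φ p.1) (Φ p.2) : ℝ))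
    (n : ℕ) (hn : 0 < n)
    (X : Fin n → Ω → S) (Y : Fin n → Ω → ℝ)
    (hXm : ∀ i, Measurable (X i)) (hYm : ∀ i, Measurable (Y i))
    (hiid : iIndepFun (fun i ω => (X i ω, Y i ω)) μ)
    (Q : Measure (S × ℝ)) (hQ : ∀ i, Measure.map (fun ω => (X i ω, Y i ω)) μ = Q)
    (hPX : ∀ i, Measure.map (X i) μ = P)
    (hYsq : ∀ i, Integrable (fun ω => (Y i ω)^2) μ)
    (g : S → ℝ) (hgm : Measurable g) (hgL2 : MemLp g 2 P)
    (hreg : ∀ i, μ[Y i | MeasurableSpace.comap (X i) inferInstance] =ᵐ[μ] fun ω => g (X i ω))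
    (σ : ℝ) (hσ : 0 ≤ σ)
    (hY1 : ∀ i, ∀ᵐ ω ∂μ,
      (μ[fun ω' => (Y i ω' - g (X i ω'))^2 | MeasurableSpace.comap (X i) inferInstance]) ω ≤ σ^2)
    (r : ℝ) (hr : 0 < r) (hhat : Ω → H) (hhatm : Measurable hhat)
    (hball : ∀ ω, ‖hhat ω‖ ≤ r)
    (hmin : ∀ ω, ∀ f : H, ‖f‖ ≤ r →
      (1 / n : ℝ) * ∑ i, (ev Φ (hhat ω) (X i ω) - Y i ω)^2 ≤
      (1 / n : ℝ) * ∑ i, (ev Φ f (X i ω) - Y i ω)^2)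
    (h₀ : H) (hh₀ : ‖h₀‖ ≤ r) :
    ∫ ω, ((1 / n : ℝ) * ∑ i, (ev Φ (hhat ω) (X i ω) - ev Φ h₀ (X i ω))^2) ∂μ ≤
      4 * κ * σ * r / Real.sqrt (n : ℝ) + 4 * ∫ x, (ev Φ h₀ x - g x)^2 ∂P := by
  classical
  set ε : Fin n → Ω → ℝ := fun i ω => Y i ω - g (X i ω) with hεdef
  set N : Ω → ℝ := fun ω => ‖(n : ℝ)⁻¹ • ∑ i, ε i ω • Φ (X i ω)‖ with hNdef
  set q : S → ℝ := fun x => (ev Φ h₀ x - g x)^2 with hqdef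
  have hnR : (0:ℝ) < n := Nat.cast_pos.mpr hn
  have hgX : ∀ i, Measurable fun ω => g (X i ω) := fun i => hgm.comp (hXm i)
  have hεm : ∀ i, Measurable (ε i) := fun i => (hYm i).sub (hgX i)
  have hkXm : ∀ i j, Measurable fun ω => (inner ℝ (Φ (X i ω)) (Φ (X j ω)) : ℝ) :=
    fun i j => hkmeas.comp ((hXm i).prodMk (hXm j))
  have hYL2 : ∀ i, MemLp (Y i) 2 μ :=
    fun i => (memLp_two_iff_integrable_sq (hYm i).aestronglyMeasurable).mpr (hYsq i)
  have hgXL2 : ∀ i, MemLp (fun ω => g (X i ω)) 2 μ := by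
    intro i
    have h0 := hgL2
    rw [← hPX i] at h0
    exact (memLp_map_measure_iff hgm.aestronglyMeasurable (hXm i).aemeasurable).mp h0
  have hεL2 : ∀ i, MemLp (ε i) 2 μ := fun i => (hYL2 i).sub (hgXL2 i)
  have hεsq_int : ∀ i, Integrable (fun ω => ε i ω ^ 2) μ := fun i => (hεL2 i).integrable_sq
  have hε_int : ∀ i, Integrable (ε i) μ := fun i => (hεL2 i).integrable one_le_two
  have hY_int : ∀ i, Integrable (Y i) μ := fun i => (hYL2 i).integrable one_le_two
  have hgX_int : ∀ i, Integrable (fun ω => g (X i ω)) μ :=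
    fun i => (hgXL2 i).integrable one_le_two
  -- key conditional expectation fact
  have keyCE : ∀ (j : Fin n) (f : S → ℝ), Measurable f → (∀ x, |f x| ≤ κ^2) →
      ∫ ω, ε j ω * f (X j ω) ∂μ = 0 := by
    intro j f hf hfb
    have hm' : MeasurableSpace.comap (X j) inferInstance
        ≤ (inferInstance : MeasurableSpace Ω) := (hXm j).comap_le
    haveI : IsFiniteMeasure (μ.trim hm') := isFiniteMeasure_trim hm'
    have hXj : @Measurable Ω S (MeasurableSpace.comap (X j) inferInstance) _ (X j) :=
      fun t ht => ⟨t, ht, rfl⟩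
    have hfX_sm : StronglyMeasurable[MeasurableSpace.comap (X j) inferInstance]
        (fun ω => f (X j ω)) := by
      have hc : Measurable[MeasurableSpace.comap (X j) inferInstance]
          fun ω => f (X j ω) := hf.comp hXj
      exact hc.stronglyMeasurable
    have hInt1 : Integrable (fun ω => f (X j ω) * Y j ω) μ := by
      refine Integrable.mono' ((hY_int j).abs.const_mul (κ^2))
        (((hf.comp (hXm j)).mul (hYm j)).aestronglyMeasurable) ?_
      filter_upwards with ω
      rw [Real.norm_eq_abs, abs_mul]
      exact mul_le_mul_of_nonneg_right (hfb _) (abs_nonneg _)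
    have hInt2 : Integrable (fun ω => f (X j ω) * g (X j ω)) μ := by
      refine Integrable.mono' ((hgX_int j).abs.const_mul (κ^2))
        (((hf.comp (hXm j)).mul (hgX j)).aestronglyMeasurable) ?_
      filter_upwards with ω
      rw [Real.norm_eq_abs, abs_mul]
      exact mul_le_mul_of_nonneg_right (hfb _) (abs_nonneg _)
    have hmul : μ[(fun ω => f (X j ω)) * Y j | MeasurableSpace.comap (X j) inferInstance]
        =ᵐ[μ] (fun ω => f (X j ω)) * μ[Y j | MeasurableSpace.comap (X j) inferInstance] :=
      condExp_mul_of_stronglyMeasurable_left hfX_sm (by exact hInt1) (hY_int j)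
    have e1 : ∫ ω, f (X j ω) * Y j ω ∂μ = ∫ ω, f (X j ω) * g (X j ω) ∂μ := by
      calc ∫ ω, f (X j ω) * Y j ω ∂μ
          = ∫ ω, ((fun ω => f (X j ω)) * Y j) ω ∂μ := rfl
        _ = ∫ ω, (μ[(fun ω => f (X j ω)) * Y j |
              MeasurableSpace.comap (X j) inferInstance]) ω ∂μ := (integral_condExp hm').symm
        _ = ∫ ω, f (X j ω) * g (X j ω) ∂μ := by
            apply integral_congr_ae
            filter_upwards [hmul, hreg j] with ω h1 h2
            rw [h1]
            simp only [Pi.mul_apply]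
            rw [h2]
    have e2 : ∫ ω, ε j ω * f (X j ω) ∂μ
        = ∫ ω, f (X j ω) * Y j ω ∂μ - ∫ ω, f (X j ω) * g (X j ω) ∂μ := by
      rw [← integral_sub hInt1 hInt2]
      apply integral_congr_ae
      filter_upwards with ω
      simp only [hεdef]
      ring
    rw [e2, e1, sub_self]
  -- variance bound
  have hεsqσ : ∀ j, ∫ ω, ε j ω ^ 2 ∂μ ≤ σ ^ 2 := by
    intro j
    have hm' : MeasurableSpace.comap (X j) inferInstance
        ≤ (inferInstance : MeasurableSpace Ω) := (hXm j).comap_le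
    haveI : IsFiniteMeasure (μ.trim hm') := isFiniteMeasure_trim hm'
    have h1 : ∫ ω, ε j ω ^ 2 ∂μ
        = ∫ ω, (μ[fun ω' => (Y j ω' - g (X j ω'))^2 |
            MeasurableSpace.comap (X j) inferInstance]) ω ∂μ :=
      (integral_condExp hm').symm
    rw [h1]
    calc ∫ ω, (μ[fun ω' => (Y j ω' - g (X j ω'))^2 |
            MeasurableSpace.comap (X j) inferInstance]) ω ∂μ
        ≤ ∫ _ω, σ^2 ∂μ := integral_mono_ae integrable_condExp (integrable_const _) (hY1 j)
      _ = σ^2 := by simp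
  -- product / independence facts
  have hVm : ∀ i, Measurable (fun ω => (X i ω, Y i ω)) := fun i => (hXm i).prodMk (hYm i)
  have hem : Measurable (fun v : S × ℝ => v.2 - g v.1) :=
    measurable_snd.sub (hgm.comp measurable_fst)
  have hkabs : ∀ x y : S, |(inner ℝ (Φ x) (Φ y) : ℝ)| ≤ κ^2 := by
    intro x y
    calc |(inner ℝ (Φ x) (Φ y) : ℝ)| ≤ ‖Φ x‖ * ‖Φ y‖ := abs_real_inner_le_norm _ _
      _ ≤ κ * κ := mul_le_mul (hκ _) (hκ _) (norm_nonneg _) hκ0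
      _ = κ^2 := (sq κ).symm
  have hFm : Measurable (fun p : (S × ℝ) × (S × ℝ) =>
      (p.1.2 - g p.1.1) * (p.2.2 - g p.2.1) * (inner ℝ (Φ p.1.1) (Φ p.2.1) : ℝ)) :=
    ((hem.comp measurable_fst).mul (hem.comp measurable_snd)).mul
      (hkmeas.comp ((measurable_fst.fst).prodMk (measurable_snd.fst)))
  haveI hQprob : IsProbabilityMeasure Q := by
    rw [← hQ ⟨0, hn⟩]
    exact Measure.isProbabilityMeasure_map (hVm ⟨0, hn⟩).aemeasurable
  have hIeQ : Integrable (fun v : S × ℝ => v.2 - g v.1) Q := by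
    rw [← hQ ⟨0, hn⟩]
    exact (integrable_map_measure hem.aestronglyMeasurable
      (hVm ⟨0, hn⟩).aemeasurable).mpr (hε_int ⟨0, hn⟩)
  have hIF : Integrable (fun p : (S × ℝ) × (S × ℝ) =>
      (p.1.2 - g p.1.1) * (p.2.2 - g p.2.1) * (inner ℝ (Φ p.1.1) (Φ p.2.1) : ℝ)) (Q.prod Q) := by
    have h1 : Integrable (fun p : (S × ℝ) × (S × ℝ) =>
        |p.1.2 - g p.1.1| * |p.2.2 - g p.2.1|) (Q.prod Q) := hIeQ.abs.mul_prod hIeQ.abs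
    refine Integrable.mono' (h1.const_mul (κ^2)) hFm.aestronglyMeasurable ?_
    filter_upwards with p
    rw [Real.norm_eq_abs, abs_mul, abs_mul]
    calc |p.1.2 - g p.1.1| * |p.2.2 - g p.2.1| * |(inner ℝ (Φ p.1.1) (Φ p.2.1) : ℝ)|
        ≤ |p.1.2 - g p.1.1| * |p.2.2 - g p.2.1| * κ^2 :=
          mul_le_mul_of_nonneg_left (hkabs _ _) (by positivity)
      _ = κ^2 * (|p.1.2 - g p.1.1| * |p.2.2 - g p.2.1|) := by ring
  have hmapij : ∀ i j, i ≠ j →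
      Measure.map (fun ω => ((X i ω, Y i ω), (X j ω, Y j ω))) μ = Q.prod Q := by
    intro i j hij
    have hind : IndepFun (fun ω => (X i ω, Y i ω)) (fun ω => (X j ω, Y j ω)) μ :=
      hiid.indepFun hij
    have h0 := (indepFun_iff_map_prod_eq_prod_map_map
      (hVm i).aemeasurable (hVm j).aemeasurable).mp hind
    rw [hQ i, hQ j] at h0
    exact h0
  -- cross terms vanish
  have hcross : ∀ i j, i ≠ j →
      ∫ ω, ε i ω * ε j ω * (inner ℝ (Φ (X i ω)) (Φ (X j ω)) : ℝ) ∂μ = 0 := by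
    intro i j hij
    have e0 : ∫ ω, ε i ω * ε j ω * (inner ℝ (Φ (X i ω)) (Φ (X j ω)) : ℝ) ∂μ
        = ∫ p : (S × ℝ) × (S × ℝ),
            (p.1.2 - g p.1.1) * (p.2.2 - g p.2.1) * (inner ℝ (Φ p.1.1) (Φ p.2.1) : ℝ)
            ∂(Q.prod Q) := by
      rw [← hmapij i j hij,
        integral_map (((hVm i).prodMk (hVm j)).aemeasurable) hFm.aestronglyMeasurable]
    rw [e0, integral_prod _ hIF]
    have hinner : ∀ v : S × ℝ,
        (∫ w : S × ℝ, (v.2 - g v.1) * (w.2 - g w.1) * (inner ℝ (Φ v.1) (Φ w.1) : ℝ) ∂Q) = 0 := by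
      intro v
      have h1 : (fun w : S × ℝ => (v.2 - g v.1) * (w.2 - g w.1) * (inner ℝ (Φ v.1) (Φ w.1) : ℝ))
          = fun w : S × ℝ => (v.2 - g v.1) * ((w.2 - g w.1) * (inner ℝ (Φ v.1) (Φ w.1) : ℝ)) := by
        funext w; ring
      rw [h1, integral_const_mul]
      have hmeasv : Measurable fun w : S × ℝ => (w.2 - g w.1) * (inner ℝ (Φ v.1) (Φ w.1) : ℝ) := by
        refine hem.mul ?_
        exact hkmeas.comp ((measurable_const (a := v.1)).prodMk measurable_fst)
      have h3 : ∫ w : S × ℝ, (w.2 - g w.1) * (inner ℝ (Φ v.1) (Φ w.1) : ℝ) ∂Q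
          = ∫ ω, ε j ω * (inner ℝ (Φ v.1) (Φ (X j ω)) : ℝ) ∂μ := by
        rw [← hQ j]
        exact integral_map (hVm j).aemeasurable hmeasv.aestronglyMeasurable
      have h2 : ∫ ω, ε j ω * (inner ℝ (Φ v.1) (Φ (X j ω)) : ℝ) ∂μ = 0 := by
        have hmx : Measurable fun x : S => (inner ℝ (Φ v.1) (Φ x) : ℝ) := by
          exact hkmeas.comp (measurable_const.prodMk measurable_id)
        exact keyCE j (fun x => (inner ℝ (Φ v.1) (Φ x) : ℝ)) hmx (fun x => hkabs _ _)
      rw [h3, h2, mul_zero]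
    simp only [hinner]
    simp
  have hIpair : ∀ i j, Integrable
      (fun ω => ε i ω * ε j ω * (inner ℝ (Φ (X i ω)) (Φ (X j ω)) : ℝ)) μ := by
    intro i j
    by_cases hij : i = j
    · subst hij
      refine Integrable.mono' ((hεsq_int i).const_mul (κ^2))
        (((hεm i).mul (hεm i)).mul (hkXm i i)).aestronglyMeasurable ?_
      filter_upwards with ω
      rw [Real.norm_eq_abs, abs_mul, abs_mul]
      calc |ε i ω| * |ε i ω| * |(inner ℝ (Φ (X i ω)) (Φ (X i ω)) : ℝ)|
          ≤ |ε i ω| * |ε i ω| * κ^2 := mul_le_mul_of_nonneg_left (hkabs _ _) (by positivity)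
        _ = κ^2 * ε i ω ^ 2 := by
            rw [← abs_mul, show ε i ω * ε i ω = ε i ω ^ 2 by ring,
              abs_of_nonneg (sq_nonneg _)]
            ring
    · exact (integrable_map_measure hFm.aestronglyMeasurable
        (((hVm i).prodMk (hVm j)).aemeasurable)).mp ((hmapij i j hij) ▸ hIF)
  have hdiag : ∀ i, ∫ ω, ε i ω * ε i ω * (inner ℝ (Φ (X i ω)) (Φ (X i ω)) : ℝ) ∂μ
      ≤ κ^2 * σ^2 := by
    intro i
    have hptw : ∀ ω, ε i ω * ε i ω * (inner ℝ (Φ (X i ω)) (Φ (X i ω)) : ℝ) ≤ κ^2 * ε i ω ^ 2 := by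
      intro ω
      have h1 : (0:ℝ) ≤ (inner ℝ (Φ (X i ω)) (Φ (X i ω)) : ℝ) := real_inner_self_nonneg
      have h2 : (inner ℝ (Φ (X i ω)) (Φ (X i ω)) : ℝ) ≤ κ^2 := by
        rw [real_inner_self_eq_norm_sq]
        nlinarith [hκ (X i ω), norm_nonneg (Φ (X i ω))]
      nlinarith [sq_nonneg (ε i ω)]
    calc ∫ ω, ε i ω * ε i ω * (inner ℝ (Φ (X i ω)) (Φ (X i ω)) : ℝ) ∂μ
        ≤ ∫ ω, κ^2 * ε i ω ^ 2 ∂μ :=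
          integral_mono (hIpair i i) ((hεsq_int i).const_mul _) hptw
      _ = κ^2 * ∫ ω, ε i ω ^ 2 ∂μ := integral_const_mul _ _
      _ ≤ κ^2 * σ^2 := mul_le_mul_of_nonneg_left (hεsqσ i) (sq_nonneg κ)
  -- expansion of N²
  have hNsq : ∀ ω, N ω ^ 2 =
      ((n:ℝ)⁻¹)^2 * ∑ i, ∑ j, ε i ω * ε j ω * (inner ℝ (Φ (X i ω)) (Φ (X j ω)) : ℝ) := by
    intro ω
    have h1 : N ω = (n:ℝ)⁻¹ * ‖∑ i, ε i ω • Φ (X i ω)‖ := by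
      simp [hNdef, norm_smul, abs_of_nonneg (inv_nonneg.mpr (le_of_lt hnR))]
    have h2 : ‖∑ i, ε i ω • Φ (X i ω)‖^2
        = ∑ i, ∑ j, ε i ω * ε j ω * (inner ℝ (Φ (X i ω)) (Φ (X j ω)) : ℝ) := by
      rw [← real_inner_self_eq_norm_sq, sum_inner]
      refine Finset.sum_congr rfl fun i _ => ?_
      rw [inner_sum]
      refine Finset.sum_congr rfl fun j _ => ?_
      rw [real_inner_smul_left, real_inner_smul_right]
      ring
    rw [h1, mul_pow, h2]
  have hNsq_int : Integrable (fun ω => N ω ^ 2) μ := by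
    have h0 : (fun ω => N ω ^ 2) = fun ω =>
        ((n:ℝ)⁻¹)^2 * ∑ i, ∑ j, ε i ω * ε j ω * (inner ℝ (Φ (X i ω)) (Φ (X j ω)) : ℝ) :=
      funext hNsq
    rw [h0]
    exact (integrable_finset_sum _ (fun i _ =>
      integrable_finset_sum _ (fun j _ => hIpair i j))).const_mul _
  have hNm : Measurable N := by
    have h0 : N = fun ω => Real.sqrt
        (((n:ℝ)⁻¹)^2 * ∑ i, ∑ j, ε i ω * ε j ω * (inner ℝ (Φ (X i ω)) (Φ (X j ω)) : ℝ)) := by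
      funext ω
      rw [← hNsq ω, Real.sqrt_sq (norm_nonneg _)]
    rw [h0]
    exact ((Finset.measurable_sum _ (fun i _ => Finset.measurable_sum _ (fun j _ =>
      ((hεm i).mul (hεm j)).mul (hkXm i j)))).const_mul _).sqrt
  have hN_int : Integrable N μ := by
    refine Integrable.mono' ((integrable_const (1:ℝ)).add hNsq_int)
      hNm.aestronglyMeasurable ?_
    filter_upwards with ω
    have h1 : 0 ≤ N ω := norm_nonneg _
    have h2 : N ω ≤ 1 + N ω ^ 2 := by nlinarith
    simpa [abs_of_nonneg h1] using h2
  -- E N² ≤ κ²σ²/n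
  have hENsq : ∫ ω, N ω ^ 2 ∂μ ≤ κ^2 * σ^2 / n := by
    have h1 : ∫ ω, N ω ^ 2 ∂μ = ((n:ℝ)⁻¹)^2 * ∑ i, ∑ j,
        ∫ ω, ε i ω * ε j ω * (inner ℝ (Φ (X i ω)) (Φ (X j ω)) : ℝ) ∂μ := by
      rw [integral_congr_ae (Filter.Eventually.of_forall hNsq), integral_const_mul,
        integral_finset_sum _ (fun i _ => integrable_finset_sum _ (fun j _ => hIpair i j))]
      congr 1
      exact Finset.sum_congr rfl fun i _ => integral_finset_sum _ (fun j _ => hIpair i j)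
    have h2 : ∀ i, ∑ j, ∫ ω, ε i ω * ε j ω * (inner ℝ (Φ (X i ω)) (Φ (X j ω)) : ℝ) ∂μ
        ≤ κ^2 * σ^2 := by
      intro i
      rw [Finset.sum_eq_single i (fun j _ hne => hcross i j (Ne.symm hne)) (by simp)]
      exact hdiag i
    calc ∫ ω, N ω ^ 2 ∂μ
        = ((n:ℝ)⁻¹)^2 * ∑ i, ∑ j,
          ∫ ω, ε i ω * ε j ω * (inner ℝ (Φ (X i ω)) (Φ (X j ω)) : ℝ) ∂μ := h1
      _ ≤ ((n:ℝ)⁻¹)^2 * ∑ _i : Fin n, κ^2 * σ^2 := by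
          refine mul_le_mul_of_nonneg_left ?_ (by positivity)
          exact Finset.sum_le_sum (fun i _ => h2 i)
      _ = ((n:ℝ)⁻¹)^2 * (n * (κ^2 * σ^2)) := by
          rw [Finset.sum_const, Finset.card_univ]
          simp [Fintype.card_fin, nsmul_eq_mul]
      _ = κ^2 * σ^2 / n := by
          field_simp
  -- E N ≤ κσ/√n
  have hEN : ∫ ω, N ω ∂μ ≤ κ * σ / Real.sqrt n := by
    have hsqn : (0:ℝ) < Real.sqrt n := Real.sqrt_pos.mpr hnR
    set t := κ * σ / Real.sqrt n with htdef
    have ht0 : 0 ≤ t := by positivity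
    have hsq : t^2 = κ^2 * σ^2 / n := by
      rw [htdef, div_pow, Real.sq_sqrt (le_of_lt hnR)]
      ring_nf
    have h4 : ∫ ω, N ω ^ 2 ∂μ ≤ t^2 := by rw [hsq]; exact hENsq
    have hNnn : 0 ≤ ∫ ω, N ω ∂μ := integral_nonneg (fun ω => norm_nonneg _)
    refine le_of_forall_pos_le_add ?_
    intro δ hδ
    have hs : 0 < t + δ := by linarith
    have hpt2 : ∀ ω, 2*(t+δ) * N ω ≤ N ω ^ 2 + (t+δ)^2 :=
      fun ω => by nlinarith [sq_nonneg (N ω - (t+δ))]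
    have h3 : 2*(t+δ) * ∫ ω, N ω ∂μ ≤ (∫ ω, N ω ^ 2 ∂μ) + (t+δ)^2 := by
      have hI1 : Integrable (fun ω => 2*(t+δ) * N ω) μ := by
        exact hN_int.const_mul _
      have hI2 : Integrable (fun ω => N ω ^ 2 + (t+δ)^2) μ := by
        exact hNsq_int.add (integrable_const _)
      have h5 := integral_mono hI1 hI2 hpt2
      rw [integral_const_mul, integral_add hNsq_int (integrable_const _), integral_const] at h5
      simpa using h5
    nlinarith [h3, h4, hs, hNnn, sq_nonneg δ]
  -- q facts
  have hevm : Measurable fun x => (inner ℝ h₀ (Φ x) : ℝ) := measurable_inner_phi Φ hkmeas h₀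
  have hqm : Measurable q := by
    have h0 : Measurable fun x => (inner ℝ h₀ (Φ x) : ℝ) - g x := hevm.sub hgm
    simpa [hqdef, ev] using h0.pow_const 2
  have hqP_int : Integrable q P := by
    refine Integrable.mono' ((integrable_const (2*(r*κ)^2)).add (hgL2.integrable_sq.const_mul 2))
      hqm.aestronglyMeasurable ?_
    filter_upwards with x
    have h1 : |(inner ℝ h₀ (Φ x) : ℝ)| ≤ r * κ := by
      calc |(inner ℝ h₀ (Φ x) : ℝ)| ≤ ‖h₀‖ * ‖Φ x‖ := abs_real_inner_le_norm _ _
        _ ≤ r * κ := mul_le_mul hh₀ (hκ x) (norm_nonneg _) (le_of_lt hr)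
    have h2 : q x = ((inner ℝ h₀ (Φ x) : ℝ) - g x)^2 := by simp [hqdef, ev]
    rw [Real.norm_eq_abs, abs_of_nonneg (by rw [h2]; positivity)]
    rw [h2]
    simp only [Pi.add_apply]
    generalize hA : (inner ℝ h₀ (Φ x) : ℝ) = A at h1 ⊢
    generalize hB : g x = B
    have h1' : A * A ≤ (r*κ) * (r*κ) := by
      have := mul_self_le_mul_self (abs_nonneg A) h1
      nlinarith [sq_abs A]
    nlinarith [sq_nonneg (A + B)]
  have hqP_nonneg : 0 ≤ ∫ x, q x ∂P := integral_nonneg (fun x => sq_nonneg _)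
  have hqX_int : ∀ i, Integrable (fun ω => q (X i ω)) μ := by
    intro i
    have h0 := hqP_int
    rw [← hPX i] at h0
    exact (integrable_map_measure hqm.aestronglyMeasurable (hXm i).aemeasurable).mp h0
  have hqX_val : ∀ i, ∫ ω, q (X i ω) ∂μ = ∫ x, q x ∂P := by
    intro i
    rw [← hPX i, integral_map (hXm i).aemeasurable hqm.aestronglyMeasurable]
  -- pointwise inequality
  have hpt : ∀ ω, (1 / n : ℝ) * ∑ i, (ev Φ (hhat ω) (X i ω) - ev Φ h₀ (X i ω))^2 ≤
      2 * ((1 / n : ℝ) * ∑ i, q (X i ω)) + 4 * r * N ω := by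
    intro ω
    set u := hhat ω with hu
    have h1n : (0:ℝ) < 1/n := by positivity
    have hmid_ball : ‖(1/2 : ℝ) • (u + h₀)‖ ≤ r := by
      rw [norm_smul, Real.norm_eq_abs, abs_of_nonneg (by norm_num : (0:ℝ) ≤ 1/2)]
      linarith [hball ω, hh₀, norm_add_le u h₀]
    set a : Fin n → ℝ := fun i => (inner ℝ u (Φ (X i ω)) : ℝ) with ha
    set b : Fin n → ℝ := fun i => (inner ℝ h₀ (Φ (X i ω)) : ℝ) with hb
    have hmide : ∀ i, ev Φ ((1/2:ℝ) • (u + h₀)) (X i ω) = (a i + b i)/2 := by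
      intro i
      simp only [ev, ha, hb, inner_add_left, real_inner_smul_left]
      ring
    have hmin2 : ∑ i, (a i - Y i ω)^2 ≤ ∑ i, ((a i + b i)/2 - Y i ω)^2 := by
      have h1 := hmin ω _ hmid_ball
      have h2 : (1/(n:ℝ)) * ∑ i, (ev Φ ((1/2:ℝ) • (u + h₀)) (X i ω) - Y i ω)^2
          = (1/(n:ℝ)) * ∑ i, ((a i + b i)/2 - Y i ω)^2 := by
        congr 1
        exact Finset.sum_congr rfl fun i _ => by rw [hmide i]
      have h3 : (1/(n:ℝ)) * ∑ i, (ev Φ u (X i ω) - Y i ω)^2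
          = (1/(n:ℝ)) * ∑ i, (a i - Y i ω)^2 := by
        congr 1
      rw [h3, h2] at h1
      exact le_of_mul_le_mul_left h1 h1n
    have hid : ∀ i : Fin n, (a i - b i)^2 = 2*(a i - Y i ω)^2 + 2*(b i - Y i ω)^2
        - 4*((a i + b i)/2 - Y i ω)^2 := fun i => by ring
    have hS1 : ∑ i, (a i - b i)^2
        ≤ 2*∑ i, (b i - Y i ω)^2 - 2*∑ i, (a i - Y i ω)^2 := by
      rw [Finset.sum_congr rfl (fun i _ => hid i), Finset.sum_sub_distrib,
        Finset.sum_add_distrib, ← Finset.mul_sum, ← Finset.mul_sum, ← Finset.mul_sum]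
      linarith [hmin2]
    have hS2 : ∑ i, (b i - Y i ω)^2 - ∑ i, (a i - Y i ω)^2
        = ∑ i, (b i - g (X i ω))^2 - ∑ i, (a i - g (X i ω))^2
          + 2*∑ i, ε i ω * (a i - b i) := by
      rw [← Finset.sum_sub_distrib,
        Finset.sum_congr rfl (fun i (_ : i ∈ Finset.univ) =>
          (show (b i - Y i ω)^2 - (a i - Y i ω)^2
            = (b i - g (X i ω))^2 - (a i - g (X i ω))^2 + 2*(ε i ω * (a i - b i)) by
            simp only [hεdef]; ring)),
        Finset.sum_add_distrib, Finset.sum_sub_distrib, ← Finset.mul_sum]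
    have hS3 : ∑ i, (a i - b i)^2
        ≤ 2*∑ i, (a i - g (X i ω))^2 + 2*∑ i, (b i - g (X i ω))^2 := by
      rw [Finset.mul_sum, Finset.mul_sum, ← Finset.sum_add_distrib]
      refine Finset.sum_le_sum fun i _ => ?_
      nlinarith [sq_nonneg (a i + b i - 2*g (X i ω))]
    have hS : ∑ i, (a i - b i)^2
        ≤ 2*∑ i, (b i - g (X i ω))^2 + 2*∑ i, ε i ω * (a i - b i) := by
      linarith [hS1, hS2, hS3]
    have hW : ∑ i, ε i ω * (a i - b i)
        = (inner ℝ (u - h₀) (∑ i, ε i ω • Φ (X i ω)) : ℝ) := by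
      rw [inner_sum]
      refine Finset.sum_congr rfl fun i _ => ?_
      rw [real_inner_smul_right, inner_sub_left]
    have hWb : ∑ i, ε i ω * (a i - b i) ≤ 2*r*‖∑ i, ε i ω • Φ (X i ω)‖ := by
      rw [hW]
      calc (inner ℝ (u - h₀) (∑ i, ε i ω • Φ (X i ω)) : ℝ)
          ≤ ‖u - h₀‖ * ‖∑ i, ε i ω • Φ (X i ω)‖ := real_inner_le_norm _ _
        _ ≤ 2*r*‖∑ i, ε i ω • Φ (X i ω)‖ :=
            mul_le_mul_of_nonneg_right
              (by linarith [norm_sub_le u h₀, hball ω, hh₀]) (norm_nonneg _)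
    have hNval : N ω = (n:ℝ)⁻¹ * ‖∑ i, ε i ω • Φ (X i ω)‖ := by
      simp [hNdef, norm_smul, abs_of_nonneg (inv_nonneg.mpr (le_of_lt hnR))]
    have hgoal_eq : (1/(n:ℝ)) * ∑ i, (ev Φ (hhat ω) (X i ω) - ev Φ h₀ (X i ω))^2
        = (1/(n:ℝ)) * ∑ i, (a i - b i)^2 := by
      congr 1
    rw [hgoal_eq]
    have hq_eq : ∑ i, (b i - g (X i ω))^2 = ∑ i, q (X i ω) := by
      rfl
    calc (1/(n:ℝ)) * ∑ i, (a i - b i)^2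
        ≤ (1/(n:ℝ)) * (2*∑ i, (b i - g (X i ω))^2 + 2*∑ i, ε i ω * (a i - b i)) :=
          mul_le_mul_of_nonneg_left hS (le_of_lt h1n)
      _ ≤ (1/(n:ℝ)) * (2*∑ i, (b i - g (X i ω))^2 + 2*(2*r*‖∑ i, ε i ω • Φ (X i ω)‖)) := by
          refine mul_le_mul_of_nonneg_left ?_ (le_of_lt h1n)
          linarith [hWb]
      _ = 2 * ((1/(n:ℝ)) * ∑ i, q (X i ω)) + 4 * r * N ω := by
          rw [hNval, hq_eq]
          field_simp
          ring
  -- assembly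
  have hRHS_int : Integrable
      (fun ω => 2 * ((1 / n : ℝ) * ∑ i, q (X i ω)) + 4 * r * N ω) μ :=
    (((integrable_finset_sum _ (fun i _ => hqX_int i)).const_mul _).const_mul _).add
      (hN_int.const_mul _)
  by_cases hLI : Integrable
      (fun ω => (1 / n : ℝ) * ∑ i, (ev Φ (hhat ω) (X i ω) - ev Φ h₀ (X i ω))^2) μ
  · have step1 : ∫ ω, ((1 / n : ℝ) * ∑ i, (ev Φ (hhat ω) (X i ω) - ev Φ h₀ (X i ω))^2) ∂μ ≤
        ∫ ω, (2 * ((1 / n : ℝ) * ∑ i, q (X i ω)) + 4 * r * N ω) ∂μ :=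
      integral_mono hLI hRHS_int hpt
    have step2 : ∫ ω, (2 * ((1 / n : ℝ) * ∑ i, q (X i ω)) + 4 * r * N ω) ∂μ =
        2 * ((1 / n : ℝ) * (n * ∫ x, q x ∂P)) + 4 * r * ∫ ω, N ω ∂μ := by
      rw [integral_add (((integrable_finset_sum _ (fun i _ => hqX_int i)).const_mul _).const_mul _)
        (hN_int.const_mul _), integral_const_mul, integral_const_mul, integral_const_mul,
        integral_finset_sum _ (fun i _ => hqX_int i)]
      congr 2
      rw [Finset.sum_congr rfl (fun i _ => hqX_val i), Finset.sum_const, Finset.card_univ]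
      simp [nsmul_eq_mul, Fintype.card_fin]
    have step3 : 2 * ((1 / n : ℝ) * (n * ∫ x, q x ∂P)) = 2 * ∫ x, q x ∂P := by
      field_simp
    have step4 : 4 * r * ∫ ω, N ω ∂μ ≤ 4 * κ * σ * r / Real.sqrt n := by
      calc 4 * r * ∫ ω, N ω ∂μ ≤ 4 * r * (κ * σ / Real.sqrt n) :=
            mul_le_mul_of_nonneg_left hEN (by positivity)
        _ = 4 * κ * σ * r / Real.sqrt n := by ring
    calc ∫ ω, ((1 / n : ℝ) * ∑ i, (ev Φ (hhat ω) (X i ω) - ev Φ h₀ (X i ω))^2) ∂μ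
        ≤ 2 * ((1 / n : ℝ) * (n * ∫ x, q x ∂P)) + 4 * r * ∫ ω, N ω ∂μ := by
          rw [← step2]; exact step1
      _ = 2 * ∫ x, q x ∂P + 4 * r * ∫ ω, N ω ∂μ := by rw [step3]
      _ ≤ 4 * κ * σ * r / Real.sqrt n + 4 * ∫ x, q x ∂P := by linarith [step4, hqP_nonneg]
  · rw [integral_undef hLI]
    have h1 : 0 ≤ 4 * κ * σ * r / Real.sqrt n := by positivity
    linarith [hqP_nonneg]
end

section
/- Assume (H). For every r > 0, E( sup_{f ∈ rB_H} | ‖f‖²_{L²(P_n)} − ‖f‖²_{L²(P)} | ) ≤ 8‖k‖²_∞ r² / n^{1/2}. -/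
open MeasureTheory ProbabilityTheory Real
open scoped BigOperators InnerProductSpace ENNReal



section Tens
variable {G : Type*} [NormedAddCommGroup G] [InnerProductSpace ℝ G] [CompleteSpace G]
variable {ι : Type*}

lemma summable_co (b : HilbertBasis ι ℝ G) (a c : G) :
    Summable fun i => ⟪a, b i⟫_ℝ * ⟪c, b i⟫_ℝ := by
  have := b.summable_inner_mul_inner a c
  simpa [real_inner_comm] using this

lemma tsum_co (b : HilbertBasis ι ℝ G) (a c : G) :
    ∑' i, ⟪a, b i⟫_ℝ * ⟪c, b i⟫_ℝ = ⟪a, c⟫_ℝ := by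
  have := b.tsum_inner_mul_inner a c
  simpa [real_inner_comm] using this

lemma summable_co_abs (b : HilbertBasis ι ℝ G) (a c : G) :
    Summable fun i => |⟪a, b i⟫_ℝ * ⟪c, b i⟫_ℝ| := by
  refine Summable.of_nonneg_of_le (fun i => abs_nonneg _) (fun i => ?_)
    (((summable_co b a a).add (summable_co b c c)).mul_left (1/2 : ℝ))
  set x := ⟪a, b i⟫_ℝ
  set y := ⟪c, b i⟫_ℝ
  have h := abs_mul_self x
  have h2 := abs_mul_self y
  have := sq_nonneg (|x| - |y|)
  rw [abs_mul]
  nlinarith [abs_nonneg x, abs_nonneg y, sq_abs x, sq_abs y, sq_nonneg (|x|-|y|)]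

lemma memlp_tens (b : HilbertBasis ι ℝ G) (a c : G) :
    Memℓp (fun p : ι × ι => ⟪a, b p.1⟫_ℝ * ⟪c, b p.2⟫_ℝ) 2 := by
  apply memℓp_gen
  have h2 : (2 : ℝ≥0∞).toReal = 2 := by norm_num
  rw [h2]
  have : (fun p : ι × ι => ‖⟪a, b p.1⟫_ℝ * ⟪c, b p.2⟫_ℝ‖ ^ (2:ℝ)) =
      fun p : ι × ι => (⟪a, b p.1⟫_ℝ * ⟪a, b p.1⟫_ℝ) * (⟪c, b p.2⟫_ℝ * ⟪c, b p.2⟫_ℝ) := by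
    funext p
    rw [Real.rpow_two]
    rw [Real.norm_eq_abs, abs_mul, mul_pow, sq_abs, sq_abs]
    ring
  rw [this]
  exact (summable_co b a a).mul_of_nonneg (summable_co b c c)
    (fun i => mul_self_nonneg _) (fun j => mul_self_nonneg _)

end Tens

section Tens2
variable {G : Type*} [NormedAddCommGroup G] [InnerProductSpace ℝ G] [CompleteSpace G]
variable {ι : Type*}

noncomputable def tens (b : HilbertBasis ι ℝ G) (a c : G) : lp (fun _ : ι × ι => ℝ) 2 :=
  ⟨fun p : ι × ι => ⟪a, b p.1⟫_ℝ * ⟪c, b p.2⟫_ℝ, memlp_tens b a c⟩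

lemma tens_apply (b : HilbertBasis ι ℝ G) (a c : G) (p : ι × ι) :
    (tens b a c : ∀ _ : ι × ι, ℝ) p = ⟪a, b p.1⟫_ℝ * ⟪c, b p.2⟫_ℝ := rfl

lemma summable_prod_co (b : HilbertBasis ι ℝ G) (a c a' c' : G) :
    Summable fun p : ι × ι => (⟪a, b p.1⟫_ℝ * ⟪a', b p.1⟫_ℝ) * (⟪c, b p.2⟫_ℝ * ⟪c', b p.2⟫_ℝ) := by
  have := summable_mul_of_summable_norm (R := ℝ)
    (f := fun i => ⟪a, b i⟫_ℝ * ⟪a', b i⟫_ℝ) (g := fun j => ⟪c, b j⟫_ℝ * ⟪c', b j⟫_ℝ)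
    (by simpa [Real.norm_eq_abs, abs_mul] using summable_co_abs b a a')
    (by simpa [Real.norm_eq_abs, abs_mul] using summable_co_abs b c c')
  exact this

lemma inner_tens (b : HilbertBasis ι ℝ G) (a c a' c' : G) :
    ⟪tens b a c, tens b a' c'⟫_ℝ = ⟪a, a'⟫_ℝ * ⟪c, c'⟫_ℝ := by
  rw [lp.inner_eq_tsum]
  have h1 : ∀ p : ι × ι, ⟪(tens b a c : ∀ _ : ι × ι, ℝ) p, (tens b a' c' : ∀ _ : ι × ι, ℝ) p⟫_ℝ
      = (⟪a, b p.1⟫_ℝ * ⟪a', b p.1⟫_ℝ) * (⟪c, b p.2⟫_ℝ * ⟪c', b p.2⟫_ℝ) := by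
    intro p
    rw [tens_apply, tens_apply, RCLike.inner_apply]
    simp only [starRingEnd_apply, star_trivial]
    ring
  rw [tsum_congr h1]
  rw [← Summable.tsum_mul_tsum (summable_co b a a') (summable_co b c c') (summable_prod_co b a c a' c')]
  rw [tsum_co, tsum_co]

lemma norm_tens (b : HilbertBasis ι ℝ G) (a c : G) :
    ‖tens b a c‖ = ‖a‖ * ‖c‖ := by
  have h1 : ‖tens b a c‖ ^ 2 = (‖a‖ * ‖c‖) ^ 2 := by
    rw [← real_inner_self_eq_norm_sq, inner_tens, real_inner_self_eq_norm_sq,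
      real_inner_self_eq_norm_sq]
    ring
  have h2 : 0 ≤ ‖a‖ * ‖c‖ := mul_nonneg (norm_nonneg _) (norm_nonneg _)
  nlinarith [norm_nonneg (tens b a c)]

lemma tens_add_left (b : HilbertBasis ι ℝ G) (a a' c : G) :
    tens b (a + a') c = tens b a c + tens b a' c := by
  apply lp.ext
  funext p
  rw [lp.coeFn_add]
  simp only [Pi.add_apply]
  rw [tens_apply, tens_apply, tens_apply, inner_add_left]
  ring

lemma tens_sub_left (b : HilbertBasis ι ℝ G) (a a' c : G) :
    tens b (a - a') c = tens b a c - tens b a' c := by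
  apply lp.ext
  funext p
  rw [lp.coeFn_sub]
  simp only [Pi.sub_apply]
  rw [tens_apply, tens_apply, tens_apply, inner_sub_left]
  ring

lemma tens_sub_right (b : HilbertBasis ι ℝ G) (a c c' : G) :
    tens b a (c - c') = tens b a c - tens b a c' := by
  apply lp.ext
  funext p
  rw [lp.coeFn_sub]
  simp only [Pi.sub_apply]
  rw [tens_apply, tens_apply, tens_apply, inner_sub_left]
  ring

lemma continuous_tens_diag (b : HilbertBasis ι ℝ G) :
    Continuous (fun a : G => tens b a a) := by
  rw [continuous_iff_continuousAt]
  intro a₀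
  apply continuousAt_of_locally_lipschitz (K := 2 * ‖a₀‖ + 1) one_pos
  intro a ha
  have key : tens b a a - tens b a₀ a₀ = tens b (a - a₀) a + tens b a₀ (a - a₀) := by
    rw [tens_sub_left, tens_sub_right]
    abel
  rw [dist_eq_norm, dist_eq_norm, key]
  calc ‖tens b (a - a₀) a + tens b a₀ (a - a₀)‖ 
      ≤ ‖tens b (a - a₀) a‖ + ‖tens b a₀ (a - a₀)‖ := norm_add_le _ _
    _ = ‖a - a₀‖ * ‖a‖ + ‖a₀‖ * ‖a - a₀‖ := by rw [norm_tens, norm_tens]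
    _ ≤ (2 * ‖a₀‖ + 1) * ‖a - a₀‖ := by
        have : ‖a‖ ≤ ‖a₀‖ + 1 := by
          have := norm_sub_norm_le a a₀
          rw [← dist_eq_norm] at *
          linarith [dist_eq_norm a a₀ ▸ le_of_lt ha]
        nlinarith [norm_nonneg (a - a₀), norm_nonneg a₀]

end Tens2


lemma stronglyMeasurable_phi {S G : Type*} [MeasurableSpace S]
    [NormedAddCommGroup G] [InnerProductSpace ℝ G] [SecondCountableTopology G]
    (Φ : S → G)
    (hk : Measurable fun p : S × S => ⟪Φ p.1, Φ p.2⟫_ℝ) :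
    StronglyMeasurable Φ := by
  letI : MeasurableSpace G := borel G
  haveI : BorelSpace G := ⟨rfl⟩
  apply Measurable.stronglyMeasurable
  -- the span of the range
  set V : Set G := (Submodule.span ℝ (Set.range Φ) : Set G) with hV
  set K : Set G := closure V with hKdef
  -- inner products against elements of the span are measurable
  have hspan : ∀ u ∈ Submodule.span ℝ (Set.range Φ), Measurable fun x => ⟪u, Φ x⟫_ℝ := by
    intro u hu
    induction hu using Submodule.span_induction with
    | mem v hv =>
        obtain ⟨y, rfl⟩ := hv
        exact hk.comp (measurable_const.prodMk measurable_id)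
    | zero => simpa using measurable_const
    | add v w _ _ hv hw =>
        simp only [inner_add_left]; exact hv.add hw
    | smul t v _ hv =>
        simpa [inner_smul_left] using hv.const_mul t
  -- inner products against elements of K are measurable
  have hKin : ∀ u ∈ K, Measurable fun x => ⟪u, Φ x⟫_ℝ := by
    intro u hu
    obtain ⟨g, hg, hgu⟩ := mem_closure_iff_seq_limit.1 hu
    have hmeas : ∀ m : ℕ, Measurable fun x => ⟪g m, Φ x⟫_ℝ := fun m => hspan _ (hg m)
    apply measurable_of_tendsto_metrizable' Filter.atTop hmeas
    rw [tendsto_pi_nhds]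
    intro x
    exact Filter.Tendsto.inner hgu tendsto_const_nhds
  -- distances to elements of K are measurable
  have hdist : ∀ u ∈ K, Measurable fun x => dist (Φ x) u := by
    intro u hu
    have hkxx : Measurable fun x => ⟪Φ x, Φ x⟫_ℝ :=
      hk.comp (measurable_id.prodMk measurable_id)
    have hm : Measurable fun x => Real.sqrt (⟪Φ x, Φ x⟫_ℝ - 2 * ⟪u, Φ x⟫_ℝ + ‖u‖^2) := by
      apply Measurable.sqrt
      exact (hkxx.sub ((hKin u hu).const_mul 2)).add measurable_const
    convert hm using 1
    funext x
    rw [dist_eq_norm]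
    rw [← Real.sqrt_sq (norm_nonneg (Φ x - u))]
    congr 1
    rw [@norm_sub_sq_real G, ← real_inner_self_eq_norm_sq, real_inner_comm (Φ x) u]
  have hΦK : ∀ x, Φ x ∈ K := fun x =>
    subset_closure (Submodule.subset_span (Set.mem_range_self x))
  -- countable dense subset of K
  obtain ⟨D, hDc, hDd⟩ := TopologicalSpace.exists_countable_dense ↥K
  set D' : Set G := Subtype.val '' D with hD'
  have hD'c : D'.Countable := hDc.image _
  have hD'K : D' ⊆ K := by rintro _ ⟨⟨u, hu⟩, _, rfl⟩; exact hu
  have happrox : ∀ u ∈ K, ∀ ε > 0, ∃ d ∈ D', dist u d < ε := by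
    intro u hu ε hε
    obtain ⟨⟨d, hdK⟩, hdD, hd⟩ := hDd.exists_dist_lt (⟨u, hu⟩ : ↥K) hε
    refine ⟨d, Set.mem_image_of_mem _ hdD, ?_⟩
    rwa [Subtype.dist_eq] at hd
  -- conclude measurability
  apply measurable_of_isOpen
  intro s hs
  have hset : Φ ⁻¹' s = ⋃ d ∈ D', ⋃ q : ℚ, ⋃ (_ : Metric.ball d (q : ℝ) ⊆ s),
      {x | dist (Φ x) d < (q : ℝ)} := by
    ext x
    simp only [Set.mem_preimage, Set.mem_iUnion, Set.mem_setOf_eq]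
    constructor
    · intro hxs
      obtain ⟨ε, hε, hball⟩ := Metric.isOpen_iff.1 hs _ hxs
      obtain ⟨d, hdD', hd⟩ := happrox (Φ x) (hΦK x) (ε / 3) (by linarith)
      obtain ⟨q, hq1, hq2⟩ := exists_rat_btwn (show dist (Φ x) d < ε / 2 by linarith)
      refine ⟨d, hdD', q, ?_, hq1⟩
      intro y hy
      apply hball
      rw [Metric.mem_ball] at hy ⊢
      calc dist y (Φ x) ≤ dist y d + dist d (Φ x) := dist_triangle _ _ _
        _ < (q : ℝ) + ε / 2 := by
            rw [dist_comm d (Φ x)]; exact add_lt_add hy (lt_trans hq1 hq2)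
        _ ≤ ε := by linarith
    · rintro ⟨d, _, q, hsub, hlt⟩
      exact hsub (Metric.mem_ball.2 hlt)
  rw [hset]
  refine MeasurableSet.biUnion hD'c fun d hd => ?_
  refine MeasurableSet.iUnion fun q => ?_
  refine MeasurableSet.iUnion fun _ => ?_
  exact measurableSet_lt (hdist d (hD'K hd)) measurable_const

set_option maxHeartbeats 2000000 in
theorem expected_sup_empirical_true_norms
    (Ω : Type*) [MeasurableSpace Ω] (μ : Measure Ω) [IsProbabilityMeasure μ]
    (S : Type*) [MeasurableSpace S] (P : Measure S) [IsProbabilityMeasure P]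
    (H : Type*) [NormedAddCommGroup H] [InnerProductSpace ℝ H]
    [SecondCountableTopology H] [MeasurableSpace H] [BorelSpace H]
    (Φ : S → H) (κ : ℝ) (hκ0 : 0 ≤ κ) (hκ : ∀ x, ‖Φ x‖ ≤ κ)
    (hkmeas : Measurable fun p : S × S => (inner ℝ (Φ p.1) (Φ p.2) : ℝ))
    (n : ℕ) (hn : 0 < n)
    (X : Fin n → Ω → S) (hXm : ∀ i, Measurable (X i))
    (hiid : iIndepFun X μ)
    (hPX : ∀ i, Measure.map (X i) μ = P)
    (r : ℝ) (hr : 0 < r) :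
    ∫ ω, (⨆ f : Metric.closedBall (0 : H) r,
        |(1 / n : ℝ) * ∑ i, (ev Φ (f : H) (X i ω))^2 - ∫ x, (ev Φ (f : H) x)^2 ∂P|) ∂μ ≤
      8 * κ^2 * r^2 / Real.sqrt (n : ℝ) := by
  classical
  haveI : Nonempty (Metric.closedBall (0 : H) r) :=
    ⟨⟨0, Metric.mem_closedBall_self (le_of_lt hr)⟩⟩
  -- move to the completion G of H
  set G := UniformSpace.Completion H with hGdef
  haveI : TopologicalSpace.SeparableSpace G := by infer_instance
  haveI : SecondCountableTopology G := UniformSpace.secondCountable_of_separable G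
  set Φ' : S → G := fun x => (Φ x : G) with hΦ'def
  have hin : ∀ (a : H) (x : S), ⟪(a : G), Φ' x⟫_ℝ = ⟪a, Φ x⟫_ℝ := fun a x =>
    UniformSpace.Completion.inner_coe a (Φ x)
  have hk' : Measurable fun p : S × S => ⟪Φ' p.1, Φ' p.2⟫_ℝ := by
    have : (fun p : S × S => ⟪Φ' p.1, Φ' p.2⟫_ℝ) = fun p : S × S => ⟪Φ p.1, Φ p.2⟫_ℝ :=
      funext fun p => hin (Φ p.1) p.2
    rw [this]; exact hkmeas
  have hΦ'sm : StronglyMeasurable Φ' := stronglyMeasurable_phi Φ' hk'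
  have hΦ'norm : ∀ x, ‖Φ' x‖ ≤ κ := fun x => by
    rw [hΦ'def]; rw [UniformSpace.Completion.norm_coe]; exact hκ x
  -- Hilbert basis and tensor map
  obtain ⟨w, b, -⟩ := exists_hilbertBasis ℝ G
  set E := lp (fun _ : ↥w × ↥w => ℝ) 2 with hEdef
  set Ψ : S → E := fun x => tens b (Φ' x) (Φ' x) with hΨdef
  have hΨsm : StronglyMeasurable Ψ := (continuous_tens_diag b).comp_stronglyMeasurable hΦ'sm
  have hΨnorm : ∀ x, ‖Ψ x‖ ≤ κ^2 := fun x => by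
    rw [hΨdef]; rw [norm_tens, sq]
    exact mul_le_mul (hΦ'norm x) (hΦ'norm x) (norm_nonneg _) hκ0
  have hΨint : Integrable Ψ P :=
    ⟨hΨsm.aestronglyMeasurable, HasFiniteIntegral.of_bounded (Filter.Eventually.of_forall hΨnorm)⟩
  set m : E := ∫ x, Ψ x ∂P with hmdef
  have hmnorm : ‖m‖ ≤ κ^2 := by
    have := norm_integral_le_of_norm_le_const (μ := P) (Filter.Eventually.of_forall hΨnorm)
    simpa using this
  -- the deviation vector
  set D : Ω → E := fun ω => (n:ℝ)⁻¹ • (∑ i, Ψ (X i ω)) - m with hDdef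
  have hYsm : ∀ i : Fin n, StronglyMeasurable fun ω => Ψ (X i ω) := fun i =>
    hΨsm.comp_measurable (hXm i)
  have hDsm : StronglyMeasurable D := by
    apply StronglyMeasurable.sub _ stronglyMeasurable_const
    exact (Finset.stronglyMeasurable_fun_sum Finset.univ fun i _ => hYsm i).const_smul ((n:ℝ)⁻¹)
  have hDnorm : ∀ ω, ‖D ω‖ ≤ 2 * κ^2 := by
    intro ω
    have h1 : ‖(n:ℝ)⁻¹ • (∑ i, Ψ (X i ω))‖ ≤ κ^2 := by
      rw [norm_smul]
      have h2 : ‖∑ i, Ψ (X i ω)‖ ≤ (n:ℝ) * κ^2 := by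
        calc ‖∑ i, Ψ (X i ω)‖ ≤ ∑ i : Fin n, ‖Ψ (X i ω)‖ := norm_sum_le _ _
          _ ≤ ∑ _i : Fin n, κ^2 := Finset.sum_le_sum fun i _ => hΨnorm _
          _ = (n:ℝ) * κ^2 := by simp [Finset.sum_const, mul_comm]
      have hn' : (0:ℝ) < n := by exact_mod_cast hn
      calc ‖(n:ℝ)⁻¹‖ * ‖∑ i, Ψ (X i ω)‖ ≤ (n:ℝ)⁻¹ * ((n:ℝ) * κ^2) := by
            rw [Real.norm_eq_abs, abs_of_pos (by positivity)]
            exact mul_le_mul_of_nonneg_left h2 (by positivity)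
        _ = κ^2 := by field_simp
    calc ‖D ω‖ ≤ ‖(n:ℝ)⁻¹ • (∑ i, Ψ (X i ω))‖ + ‖m‖ := norm_sub_le _ _
      _ ≤ 2 * κ^2 := by linarith
  -- Step A: pointwise bound of the supremum
  have stepA : ∀ ω, (⨆ f : Metric.closedBall (0 : H) r,
      |(1 / n : ℝ) * ∑ i, (ev Φ (f : H) (X i ω))^2 - ∫ x, (ev Φ (f : H) x)^2 ∂P|)
      ≤ r^2 * ‖D ω‖ := by
    intro ω
    apply ciSup_le
    intro f
    set g : H := (f : H) with hgdef
    have hgr : ‖g‖ ≤ r := by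
      have h2 := f.2
      rw [Metric.mem_closedBall, dist_zero_right] at h2
      exact h2
    set F : E := tens b (g : G) (g : G) with hFdef
    have hFnorm : ‖F‖ ≤ r^2 := by
      rw [hFdef, norm_tens, UniformSpace.Completion.norm_coe, sq]
      exact mul_le_mul hgr hgr (norm_nonneg _) (le_of_lt hr)
    have hev : ∀ x, (ev Φ g x)^2 = ⟪F, Ψ x⟫_ℝ := by
      intro x
      rw [hFdef, hΨdef, inner_tens]
      have : ev Φ g x = ⟪(g:G), Φ' x⟫_ℝ := by rw [hin]; rfl
      rw [this]; ring
    have hint : ∫ x, (ev Φ g x)^2 ∂P = ⟪F, m⟫_ℝ := by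
      rw [hmdef, ← integral_inner hΨint F]
      exact integral_congr_ae (Filter.Eventually.of_forall fun x => hev x)
    have hemp : (1 / n : ℝ) * ∑ i, (ev Φ g (X i ω))^2
        = ⟪F, (n:ℝ)⁻¹ • (∑ i, Ψ (X i ω))⟫_ℝ := by
      rw [real_inner_smul_right, inner_sum]
      rw [one_div]
      congr 1
      exact Finset.sum_congr rfl fun i _ => hev (X i ω)
    have hkey : (1 / n : ℝ) * ∑ i, (ev Φ g (X i ω))^2 - ∫ x, (ev Φ g x)^2 ∂P
        = ⟪F, D ω⟫_ℝ := by
      rw [hemp, hint, hDdef, inner_sub_right]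
    rw [hkey]
    calc |⟪F, D ω⟫_ℝ| ≤ ‖F‖ * ‖D ω‖ := abs_real_inner_le_norm _ _
      _ ≤ r^2 * ‖D ω‖ := mul_le_mul_of_nonneg_right hFnorm (norm_nonneg _)
  -- Step B: second moment bound
  have hnR : (0:ℝ) < n := by exact_mod_cast hn
  set Y : Fin n → Ω → E := fun i ω => Ψ (X i ω) - m with hYdef
  have hYsm' : ∀ i, StronglyMeasurable (Y i) := fun i => (hYsm i).sub stronglyMeasurable_const
  have hYnorm : ∀ i ω, ‖Y i ω‖ ≤ 2 * κ^2 := by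
    intro i ω
    calc ‖Ψ (X i ω) - m‖ ≤ ‖Ψ (X i ω)‖ + ‖m‖ := norm_sub_le _ _
      _ ≤ 2 * κ^2 := by have := hΨnorm (X i ω); linarith
  have hYYint : ∀ i j : Fin n, Integrable (fun ω => ⟪Y i ω, Y j ω⟫_ℝ) μ := by
    intro i j
    refine ⟨((hYsm' i).inner (hYsm' j)).aestronglyMeasurable,
      HasFiniteIntegral.of_bounded (C := (2*κ^2) * (2*κ^2)) (Filter.Eventually.of_forall fun ω => ?_)⟩
    calc ‖⟪Y i ω, Y j ω⟫_ℝ‖ ≤ ‖Y i ω‖ * ‖Y j ω‖ := norm_inner_le_norm _ _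
      _ ≤ (2*κ^2) * (2*κ^2) := by
          have h1 := hYnorm i ω; have h2 := hYnorm j ω
          exact mul_le_mul h1 h2 (norm_nonneg _) (by positivity)
  have hij0 : ∀ i j : Fin n, i ≠ j → ∫ ω, ⟪Y i ω, Y j ω⟫_ℝ ∂μ = 0 := by
    intro i j hij
    have hpair : Measure.map (fun ω => (X i ω, X j ω)) μ = P.prod P := by
      have h := (ProbabilityTheory.indepFun_iff_map_prod_eq_prod_map_map
        (hXm i).aemeasurable (hXm j).aemeasurable).mp (hiid.indepFun hij)
      rw [h, hPX i, hPX j]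
    set gf : S × S → ℝ := fun p => ⟪Ψ p.1 - m, Ψ p.2 - m⟫_ℝ with hgfdef
    have hgsm : StronglyMeasurable gf :=
      ((hΨsm.comp_measurable measurable_fst).sub stronglyMeasurable_const).inner
        ((hΨsm.comp_measurable measurable_snd).sub stronglyMeasurable_const)
    have h1 : ∫ ω, ⟪Y i ω, Y j ω⟫_ℝ ∂μ = ∫ p, gf p ∂(P.prod P) := by
      rw [← hpair, integral_map ((hXm i).prodMk (hXm j)).aemeasurable
        hgsm.aestronglyMeasurable]
    have hgint : Integrable gf (P.prod P) := by
      refine ⟨hgsm.aestronglyMeasurable, HasFiniteIntegral.of_bounded (C := (2*κ^2)*(2*κ^2))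
        (Filter.Eventually.of_forall fun p => ?_)⟩
      calc ‖gf p‖ ≤ ‖Ψ p.1 - m‖ * ‖Ψ p.2 - m‖ := norm_inner_le_norm _ _
        _ ≤ (2*κ^2) * (2*κ^2) := by
            have h1 : ‖Ψ p.1 - m‖ ≤ 2*κ^2 := by
              have := hΨnorm p.1
              calc ‖Ψ p.1 - m‖ ≤ ‖Ψ p.1‖ + ‖m‖ := norm_sub_le _ _
                _ ≤ 2*κ^2 := by linarith
            have h2 : ‖Ψ p.2 - m‖ ≤ 2*κ^2 := by
              have := hΨnorm p.2
              calc ‖Ψ p.2 - m‖ ≤ ‖Ψ p.2‖ + ‖m‖ := norm_sub_le _ _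
                _ ≤ 2*κ^2 := by linarith
            exact mul_le_mul h1 h2 (norm_nonneg _) (by positivity)
    have hzero : ∫ y, (Ψ y - m) ∂P = 0 := by
      rw [integral_sub hΨint (integrable_const m)]
      simp [hmdef]
    have hginner : ∀ x : S, ∫ y, gf (x, y) ∂P = 0 := by
      intro x
      have hsub : Integrable (fun y => Ψ y - m) P := hΨint.sub (integrable_const m)
      calc ∫ y, gf (x, y) ∂P = ⟪Ψ x - m, ∫ y, (Ψ y - m) ∂P⟫_ℝ :=
            integral_inner hsub (Ψ x - m)
        _ = 0 := by rw [hzero, inner_zero_right]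
    rw [h1, MeasureTheory.integral_prod _ hgint]
    rw [integral_congr_ae (Filter.Eventually.of_forall hginner)]
    simp
  have hii : ∀ i : Fin n, ∫ ω, ⟪Y i ω, Y i ω⟫_ℝ ∂μ ≤ 4*κ^4 := by
    intro i
    calc ∫ ω, ⟪Y i ω, Y i ω⟫_ℝ ∂μ ≤ ∫ _ω, (4*κ^4 : ℝ) ∂μ := by
          apply integral_mono (hYYint i i) (integrable_const _)
          intro ω
          show ⟪Y i ω, Y i ω⟫_ℝ ≤ 4*κ^4
          rw [real_inner_self_eq_norm_sq]
          have := hYnorm i ω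
          nlinarith [norm_nonneg (Y i ω)]
      _ = 4*κ^4 := by simp
  have hDY : ∀ ω, D ω = (n:ℝ)⁻¹ • ∑ i, Y i ω := by
    intro ω
    rw [hDdef, hYdef]
    simp only
    rw [Finset.sum_sub_distrib, smul_sub, Finset.sum_const, Finset.card_univ, Fintype.card_fin]
    congr 1
    rw [← Nat.cast_smul_eq_nsmul ℝ n m, smul_smul, inv_mul_cancel₀ (ne_of_gt hnR), one_smul]
  have stepB2 : ∫ ω, ‖D ω‖^2 ∂μ ≤ 4 * κ^4 / n := by
    have hexp : ∀ ω, ‖D ω‖^2 = (n:ℝ)⁻¹ * ((n:ℝ)⁻¹ * ∑ i, ∑ j, ⟪Y i ω, Y j ω⟫_ℝ) := by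
      intro ω
      rw [← real_inner_self_eq_norm_sq, hDY ω, real_inner_smul_left, real_inner_smul_right]
      congr 1; congr 1
      rw [sum_inner]
      exact Finset.sum_congr rfl fun i _ => inner_sum _ _ _
    calc ∫ ω, ‖D ω‖^2 ∂μ
        = (n:ℝ)⁻¹ * ((n:ℝ)⁻¹ * ∑ i, ∑ j, ∫ ω, ⟪Y i ω, Y j ω⟫_ℝ ∂μ) := by
          rw [integral_congr_ae (Filter.Eventually.of_forall hexp)]
          rw [integral_const_mul, integral_const_mul]
          congr 2
          rw [integral_finset_sum _ (fun i _ => integrable_finset_sum _ (fun j _ => hYYint i j))]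
          exact Finset.sum_congr rfl fun i _ => integral_finset_sum _ fun j _ => hYYint i j
      _ ≤ (n:ℝ)⁻¹ * ((n:ℝ)⁻¹ * ((n:ℝ) * (4*κ^4))) := by
          have hsum : ∑ i : Fin n, ∑ j : Fin n, ∫ ω, ⟪Y i ω, Y j ω⟫_ℝ ∂μ ≤ (n:ℝ) * (4*κ^4) := by
            have hrow : ∀ i : Fin n, ∑ j : Fin n, ∫ ω, ⟪Y i ω, Y j ω⟫_ℝ ∂μ ≤ 4*κ^4 := by
              intro i
              have : ∑ j : Fin n, ∫ ω, ⟪Y i ω, Y j ω⟫_ℝ ∂μ = ∫ ω, ⟪Y i ω, Y i ω⟫_ℝ ∂μ := by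
                apply Finset.sum_eq_single_of_mem i (Finset.mem_univ i)
                intro j _ hji
                exact hij0 i j (fun h => hji h.symm)
              rw [this]; exact hii i
            calc ∑ i : Fin n, ∑ j : Fin n, ∫ ω, ⟪Y i ω, Y j ω⟫_ℝ ∂μ
                ≤ ∑ _i : Fin n, (4*κ^4 : ℝ) := Finset.sum_le_sum fun i _ => hrow i
              _ = (n:ℝ) * (4*κ^4) := by simp [mul_comm]
          have h2 : (0:ℝ) ≤ (n:ℝ)⁻¹ := by positivity
          apply mul_le_mul_of_nonneg_left _ h2
          exact mul_le_mul_of_nonneg_left hsum h2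
      _ = 4 * κ^4 / n := by field_simp
  -- Step B1: first moment from second moment
  have hIntN : Integrable (fun ω => ‖D ω‖) μ :=
    ⟨hDsm.norm.aestronglyMeasurable, HasFiniteIntegral.of_bounded (C := 2*κ^2)
      (Filter.Eventually.of_forall fun ω => by
        rw [Real.norm_eq_abs, abs_of_nonneg (norm_nonneg _)]; exact hDnorm ω)⟩
  have hIntN2 : Integrable (fun ω => ‖D ω‖^2) μ :=
    ⟨(hDsm.norm.pow 2).aestronglyMeasurable, HasFiniteIntegral.of_bounded (C := (2*κ^2)^2)
      (Filter.Eventually.of_forall fun ω => by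
        rw [Real.norm_eq_abs, abs_of_nonneg (sq_nonneg _)]
        have := hDnorm ω
        nlinarith [norm_nonneg (D ω)])⟩
  have stepB : ∫ ω, ‖D ω‖ ∂μ ≤ 2 * κ^2 / Real.sqrt n := by
    set I1 : ℝ := ∫ ω, ‖D ω‖ ∂μ with hI1
    set I2 : ℝ := ∫ ω, ‖D ω‖^2 ∂μ with hI2
    have hI1nn : 0 ≤ I1 := integral_nonneg fun ω => norm_nonneg _
    have hsq : I1^2 ≤ I2 := by
      have h0 : 0 ≤ ∫ ω, (‖D ω‖ - I1)^2 ∂μ := integral_nonneg fun ω => sq_nonneg _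
      have hexp : ∫ ω, (‖D ω‖ - I1)^2 ∂μ = I2 - 2*I1*I1 + I1^2 := by
        have heq : (fun ω => (‖D ω‖ - I1)^2) =
            fun ω => ‖D ω‖^2 - 2*I1*‖D ω‖ + I1^2 := funext fun ω => by ring
        have hsubint : Integrable (fun ω => ‖D ω‖^2 - 2*I1*‖D ω‖) μ := by
          exact hIntN2.sub (hIntN.const_mul (2*I1))
        rw [heq]
        rw [integral_add hsubint (integrable_const _)]
        rw [integral_sub hIntN2 (hIntN.const_mul (2*I1))]
        rw [integral_const_mul]
        simp [hI1, hI2]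
      nlinarith
    have hI2b : I2 ≤ 4*κ^4 / n := stepB2
    calc I1 = Real.sqrt (I1^2) := (Real.sqrt_sq hI1nn).symm
      _ ≤ Real.sqrt (4*κ^4/n) := Real.sqrt_le_sqrt (le_trans hsq hI2b)
      _ = 2 * κ^2 / Real.sqrt n := by
          rw [show (4*κ^4 : ℝ) = (2*κ^2)^2 by ring]
          rw [Real.sqrt_div (sq_nonneg _), Real.sqrt_sq (by positivity)]
  -- Step C: conclude
  have hIntD : Integrable (fun ω => r^2 * ‖D ω‖) μ := by
    refine Integrable.const_mul ?_ _
    exact ⟨hDsm.norm.aestronglyMeasurable, HasFiniteIntegral.of_bounded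
      (C := 2*κ^2) (Filter.Eventually.of_forall fun ω => by
        rw [Real.norm_eq_abs, abs_of_nonneg (norm_nonneg _)]; exact hDnorm ω)⟩
  calc ∫ ω, (⨆ f : Metric.closedBall (0 : H) r,
        |(1 / n : ℝ) * ∑ i, (ev Φ (f : H) (X i ω))^2 - ∫ x, (ev Φ (f : H) x)^2 ∂P|) ∂μ
      ≤ ∫ ω, r^2 * ‖D ω‖ ∂μ := by
        apply integral_mono_of_nonneg
        · exact Filter.Eventually.of_forall fun ω => Real.iSup_nonneg fun f => abs_nonneg _
        · exact hIntD
        · exact Filter.Eventually.of_forall stepA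
    _ = r^2 * ∫ ω, ‖D ω‖ ∂μ := integral_const_mul _ _
    _ ≤ r^2 * (2 * κ^2 / Real.sqrt n) := by
        exact mul_le_mul_of_nonneg_left stepB (by positivity)
    _ ≤ 8 * κ^2 * r^2 / Real.sqrt n := by
        have hdiff : 8 * κ^2 * r^2 / Real.sqrt (n:ℝ) - r^2 * (2*κ^2 / Real.sqrt (n:ℝ))
            = (6*κ^2*r^2) * (Real.sqrt (n:ℝ))⁻¹ := by
          rw [div_eq_mul_inv, div_eq_mul_inv]; ring
        have hnn : (0:ℝ) ≤ (6*κ^2*r^2) * (Real.sqrt (n:ℝ))⁻¹ := by positivity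
        linarith
end

section
/- Let X_1, …, X_n be i.i.d. S-valued random variables with distribution P, let D > 0 and let A be a separable set of bounded measurable real-valued functions on S with ‖f‖_∞ ≤ D for all f ∈ A. Let Z = sup_{f ∈ A} | ‖f‖²_{L²(P_n)} − ‖f‖²_{L²(P)} |. Then for every t > 0, with probability at least 1 − e^{−t}, Z ≤ E(Z) + ( 2D⁴ t / n + 4D² E(Z) t / n )^{1/2} + 2D² t / (3n). -/
open MeasureTheory ProbabilityTheory Real
open scoped BigOperators

set_option linter.unusedSectionVars false
set_option linter.unusedVariables false
set_option linter.unnecessarySimpa false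
set_option linter.deprecated false
set_option maxHeartbeats 1000000

section Aux

variable {S : Type*} [MeasurableSpace S]

lemma myIntegrable_of_bounded {Q : Measure S} [IsFiniteMeasure Q] {f : S → ℝ}
    (hf : AEStronglyMeasurable f Q) {C : ℝ} (h : ∀ x, |f x| ≤ C) : Integrable f Q :=
  ⟨hf, HasFiniteIntegral.of_bounded (C := C)
    (Filter.Eventually.of_forall (by simpa [Real.norm_eq_abs] using h))⟩

lemma myMgf_bound (Q : Measure S) [IsProbabilityMeasure Q] (Y : S → ℝ) (hY : Measurable Y)
    (c l : ℝ) (hc : 0 ≤ c) (hb : ∀ y, |Y y| ≤ c) (h0 : ∫ y, Y y ∂Q = 0) :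
    ∫ y, Real.exp (l * Y y) ∂Q ≤ Real.exp (l ^ 2 * c ^ 2 / 2) := by
  rcases eq_or_lt_of_le hc with hc0 | hc0
  · have hY0 : ∀ y, Y y = 0 := fun y => abs_eq_zero.mp (le_antisymm (hc0 ▸ hb y) (abs_nonneg _))
    simp only [hY0, mul_zero, Real.exp_zero]
    rw [integral_const]
    simp [Real.one_le_exp_iff]
    positivity
  · -- pointwise convexity bound
    have key : ∀ y, Real.exp (l * Y y) ≤
        Real.cosh (l * c) + (Y y / c) * Real.sinh (l * c) := by
      intro y
      set a := Y y with ha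
      have h1 : -c ≤ a := neg_le_of_abs_le (hb y)
      have h2 : a ≤ c := le_of_abs_le (hb y)
      have hθ1 : (0:ℝ) ≤ (c + a) / (2 * c) := by
        apply div_nonneg (by linarith) (by linarith)
      have hθ2 : (0:ℝ) ≤ (c - a) / (2 * c) := by
        apply div_nonneg (by linarith) (by linarith)
      have hcne : c ≠ 0 := ne_of_gt hc0
      have hsum : (c + a) / (2 * c) + (c - a) / (2 * c) = 1 := by
        field_simp
        ring
      have hcvx := convexOn_exp.2 (Set.mem_univ (l * c)) (Set.mem_univ (-(l * c))) hθ1 hθ2 hsum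
      have harg : (c + a) / (2 * c) * (l * c) + (c - a) / (2 * c) * (-(l * c)) = l * a := by
        field_simp
        ring
      simp only [smul_eq_mul] at hcvx
      rw [harg] at hcvx
      refine hcvx.trans (le_of_eq ?_)
      rw [Real.cosh_eq, Real.sinh_eq]
      field_simp
      ring
    -- integrate
    have hYint : Integrable Y Q := myIntegrable_of_bounded hY.aestronglyMeasurable hb
    have hEint : Integrable (fun y => Real.exp (l * Y y)) Q := by
      refine myIntegrable_of_bounded ((hY.const_mul l).exp).aestronglyMeasurable
        (C := Real.exp (|l| * c)) fun y => ?_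
      rw [abs_of_nonneg (Real.exp_pos _).le]
      refine Real.exp_le_exp.mpr ?_
      calc l * Y y ≤ |l * Y y| := le_abs_self _
        _ = |l| * |Y y| := abs_mul _ _
        _ ≤ |l| * c := by
            exact mul_le_mul_of_nonneg_left (hb y) (abs_nonneg _)
    have hRint : Integrable (fun y => Real.cosh (l * c) + (Y y / c) * Real.sinh (l * c)) Q := by
      apply Integrable.add (integrable_const _)
      exact (hYint.div_const c).mul_const _
    have := integral_mono hEint hRint key
    refine this.trans ?_
    rw [integral_add (integrable_const _) ((hYint.div_const c).mul_const _), integral_const]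
    simp only [measure_univ, probReal_univ, ENNReal.toReal_one, smul_eq_mul, one_mul]
    have : ∫ y, (Y y / c) * Real.sinh (l * c) ∂Q = 0 := by
      rw [integral_mul_const]
      simp only [div_eq_mul_inv, integral_mul_const, h0, zero_mul]
    rw [this, add_zero]
    calc Real.cosh (l * c) ≤ Real.exp ((l * c) ^ 2 / 2) := Real.cosh_le_exp_half_sq _
      _ = Real.exp (l ^ 2 * c ^ 2 / 2) := by ring_nf


lemma myFubini_cons (P : Measure S) [IsProbabilityMeasure P] {n : ℕ}
    (g : (Fin (n+1) → S) → ℝ) (hg : Measurable g) {Bg : ℝ} (hgb : ∀ x, |g x| ≤ Bg) :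
    ∫ x, g x ∂(Measure.pi fun _ : Fin (n+1) => P) =
      ∫ z, ∫ y, g (Fin.cons y z) ∂P ∂(Measure.pi fun _ : Fin n => P) := by
  set e := MeasurableEquiv.piFinSuccAbove (fun _ : Fin (n+1) => S) 0 with he
  have mp : MeasurePreserving e (Measure.pi fun _ : Fin (n+1) => P)
      (P.prod (Measure.pi fun _ : Fin n => P)) :=
    measurePreserving_piFinSuccAbove (fun _ : Fin (n+1) => P) 0
  have mps : MeasurePreserving e.symm (P.prod (Measure.pi fun _ : Fin n => P))
      (Measure.pi fun _ : Fin (n+1) => P) := mp.symm e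
  have h1 : ∫ x, g x ∂(Measure.pi fun _ : Fin (n+1) => P)
      = ∫ p, g (e.symm p) ∂(P.prod (Measure.pi fun _ : Fin n => P)) :=
    (mps.integral_comp' g).symm
  have hes : ∀ p : S × (Fin n → S), e.symm p = Fin.cons p.1 p.2 := by
    intro p
    simp [he, MeasurableEquiv.piFinSuccAbove, Fin.consEquiv]
  have hint : Integrable (fun p : S × (Fin n → S) => g (e.symm p))
      (P.prod (Measure.pi fun _ : Fin n => P)) := by
    refine myIntegrable_of_bounded (f := fun p => g (e.symm p))
      ((hg.comp e.symm.measurable).aestronglyMeasurable) (C := Bg) fun p => hgb _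
  rw [h1, integral_prod_symm _ hint]
  congr 1 with z
  congr 1 with y
  rw [hes (y, z)]


lemma myExpBound {f : S → ℝ} {B : ℝ} (hfb : ∀ x, |f x| ≤ B) (l : ℝ) (x : S) :
    |Real.exp (l * f x)| ≤ Real.exp (|l| * B) := by
  rw [abs_of_nonneg (Real.exp_pos _).le]
  refine Real.exp_le_exp.mpr ?_
  calc l * f x ≤ |l * f x| := le_abs_self _
    _ = |l| * |f x| := abs_mul _ _
    _ ≤ |l| * B := mul_le_mul_of_nonneg_left (hfb x) (abs_nonneg _)

lemma myTensor_mgf (P : Measure S) [IsProbabilityMeasure P] :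
    ∀ (n : ℕ) (F : (Fin n → S) → ℝ), Measurable F → ∀ (B : ℝ), (∀ x, |F x| ≤ B) →
    ∀ (c l : ℝ), 0 ≤ c →
    (∀ (x : Fin n → S) (i : Fin n) (y : S), |F x - F (Function.update x i y)| ≤ c) →
    ∫ x, Real.exp (l * F x) ∂(Measure.pi fun _ : Fin n => P) ≤
      Real.exp (l * ∫ x, F x ∂(Measure.pi fun _ : Fin n => P) + n * (l ^ 2 * c ^ 2 / 2)) := by
  intro n
  induction n with
  | zero =>
      intro F hF B hFb c l hc hd
      have hx : ∀ x : Fin 0 → S, x = (fun i => i.elim0) := fun x => funext fun i => i.elim0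
      have hFconst : F = fun _ => F (fun i => i.elim0) := funext fun x => by rw [hx x]
      rw [hFconst]
      rw [integral_const, integral_const]
      simp
  | succ n ih =>
      intro F hF B hFb c l hc hd
      -- the conditional-expectation-like function
      have hconsm : Measurable (fun p : (Fin n → S) × S => (Fin.cons p.2 p.1 : Fin (n+1) → S)) := by
        refine measurable_pi_lambda _ fun j => ?_
        refine Fin.cases ?_ ?_ j
        · simpa using measurable_snd
        · intro i
          have hmi : Measurable fun p : (Fin n → S) × S => p.1 i := (measurable_pi_apply i).comp measurable_fst; simpa using hmi
      set g : (Fin n → S) → ℝ := fun z => ∫ y, F (Fin.cons y z) ∂P with hgdef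
      have hgsm : StronglyMeasurable g := by
        have : StronglyMeasurable (fun p : (Fin n → S) × S => F (Fin.cons p.2 p.1)) :=
          (hF.comp hconsm).stronglyMeasurable
        exact this.integral_prod_right'
      have hgm : Measurable g := hgsm.measurable
      have hFcm : ∀ z : Fin n → S, Measurable fun y : S => F (Fin.cons y z) := by
        intro z
        apply hF.comp
        refine measurable_pi_lambda _ fun j => ?_
        refine Fin.cases ?_ ?_ j
        · have hmi : Measurable fun y : S => y := measurable_id; simpa using hmi
        · intro i; simpa using measurable_const
      have hFc_int : ∀ z : Fin n → S, Integrable (fun y => F (Fin.cons y z)) P := fun z =>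
        myIntegrable_of_bounded (hFcm z).aestronglyMeasurable (fun y => hFb _)
      have hgb : ∀ z, |g z| ≤ B := by
        intro z
        rw [hgdef]
        have := norm_integral_le_of_norm_le_const
          (μ := P) (f := fun y => F (Fin.cons y z)) (C := B)
          (Filter.Eventually.of_forall fun y => by simpa [Real.norm_eq_abs] using hFb _)
        simpa [Real.norm_eq_abs, measure_univ] using this
      -- bounded differences for g
      have hgd : ∀ (z : Fin n → S) (i : Fin n) (y : S), |g z - g (Function.update z i y)| ≤ c := by
        intro z i y
        have h1 : g z - g (Function.update z i y)
            = ∫ w, (F (Fin.cons w z) - F (Fin.cons w (Function.update z i y))) ∂P := by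
          rw [integral_sub (hFc_int z) (hFc_int _)]
        rw [h1]
        have := norm_integral_le_of_norm_le_const (μ := P)
          (f := fun w => F (Fin.cons w z) - F (Fin.cons w (Function.update z i y))) (C := c)
          (Filter.Eventually.of_forall fun w => by
            simpa [Real.norm_eq_abs, ← Fin.cons_update] using hd (Fin.cons w z) i.succ y)
        simpa [Real.norm_eq_abs, measure_univ] using this
      -- per-z mgf bound
      have hz : ∀ z : Fin n → S,
          ∫ y, Real.exp (l * F (Fin.cons y z)) ∂P
            ≤ Real.exp (l * g z) * Real.exp (l ^ 2 * c ^ 2 / 2) := by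
        intro z
        have hYm : Measurable fun y : S => F (Fin.cons y z) - g z :=
          (hFcm z).sub measurable_const
        have hYb : ∀ y, |F (Fin.cons y z) - g z| ≤ c := by
          intro y
          have h1 : F (Fin.cons y z) - g z
              = ∫ w, (F (Fin.cons y z) - F (Fin.cons w z)) ∂P := by
            rw [integral_sub (integrable_const _) (hFc_int z), integral_const]
            simp [measure_univ, hgdef]
          rw [h1]
          have := norm_integral_le_of_norm_le_const (μ := P)
            (f := fun w => F (Fin.cons y z) - F (Fin.cons w z)) (C := c)
            (Filter.Eventually.of_forall fun w => by
              simpa [Real.norm_eq_abs, Fin.update_cons_zero] using hd (Fin.cons y z) 0 w)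
          simpa [Real.norm_eq_abs, measure_univ] using this
        have hY0 : ∫ y, (F (Fin.cons y z) - g z) ∂P = 0 := by
          rw [integral_sub (hFc_int z) (integrable_const _), integral_const]
          simp [measure_univ, hgdef]
        have hmgf := myMgf_bound P _ hYm c l hc hYb hY0
        have heq : ∀ y : S, Real.exp (l * F (Fin.cons y z))
            = Real.exp (l * g z) * Real.exp (l * (F (Fin.cons y z) - g z)) := by
          intro y
          rw [← Real.exp_add]
          ring_nf
        calc ∫ y, Real.exp (l * F (Fin.cons y z)) ∂P
            = ∫ y, Real.exp (l * g z) * Real.exp (l * (F (Fin.cons y z) - g z)) ∂P := by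
              exact integral_congr_ae (Filter.Eventually.of_forall heq)
          _ = Real.exp (l * g z) * ∫ y, Real.exp (l * (F (Fin.cons y z) - g z)) ∂P := by
              rw [integral_const_mul]
          _ ≤ Real.exp (l * g z) * Real.exp (l ^ 2 * c ^ 2 / 2) := by
              exact mul_le_mul_of_nonneg_left hmgf (Real.exp_pos _).le
      -- main chain
      have hExpm : Measurable fun x : Fin (n+1) → S => Real.exp (l * F x) :=
        (hF.const_mul l).exp
      have hExpb : ∀ x, |Real.exp (l * F x)| ≤ Real.exp (|l| * B) := myExpBound hFb l
      have hF1 := myFubini_cons P (fun x => Real.exp (l * F x)) hExpm hExpb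
      have hF2 := myFubini_cons P F hF hFb
      -- integrability of inner integrals
      have hprod_int : Integrable (fun p : S × (Fin n → S) => Real.exp (l * F (Fin.cons p.1 p.2)))
          (P.prod (Measure.pi fun _ : Fin n => P)) := by
        refine myIntegrable_of_bounded ?_ (C := Real.exp (|l| * B)) (fun p => hExpb _)
        have : Measurable fun p : S × (Fin n → S) => F (Fin.cons p.1 p.2) := by
          apply hF.comp
          refine measurable_pi_lambda _ fun j => ?_
          refine Fin.cases ?_ ?_ j
          · simpa using measurable_fst
          · intro i
            have hmi : Measurable fun p : S × (Fin n → S) => p.2 i := (measurable_pi_apply i).comp measurable_snd; simpa using hmi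
        exact ((this.const_mul l).exp).aestronglyMeasurable
      have hinner_int : Integrable (fun z : Fin n → S => ∫ y, Real.exp (l * F (Fin.cons y z)) ∂P)
          (Measure.pi fun _ : Fin n => P) := hprod_int.integral_prod_right
      have hgexp_int : Integrable (fun z : Fin n → S => Real.exp (l * g z) * Real.exp (l ^ 2 * c ^ 2 / 2))
          (Measure.pi fun _ : Fin n => P) := by
        refine myIntegrable_of_bounded (((hgm.const_mul l).exp.mul_const _).aestronglyMeasurable)
          (C := Real.exp (|l| * B) * Real.exp (l ^ 2 * c ^ 2 / 2)) fun z => ?_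
        rw [abs_mul, abs_of_nonneg (Real.exp_pos _).le, abs_of_nonneg (Real.exp_pos _).le]
        exact mul_le_mul_of_nonneg_right
          (by simpa [abs_of_nonneg (Real.exp_pos (l * g z)).le] using myExpBound hgb l z)
          (Real.exp_pos _).le
      have hih := ih g hgm B hgb c l hc hgd
      calc ∫ x, Real.exp (l * F x) ∂(Measure.pi fun _ : Fin (n+1) => P)
          = ∫ z, ∫ y, Real.exp (l * F (Fin.cons y z)) ∂P ∂(Measure.pi fun _ : Fin n => P) := hF1
        _ ≤ ∫ z, Real.exp (l * g z) * Real.exp (l ^ 2 * c ^ 2 / 2) ∂(Measure.pi fun _ : Fin n => P) :=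
            integral_mono hinner_int hgexp_int hz
        _ = Real.exp (l ^ 2 * c ^ 2 / 2) * ∫ z, Real.exp (l * g z) ∂(Measure.pi fun _ : Fin n => P) := by
            rw [← integral_const_mul]
            congr 1 with z
            ring
        _ ≤ Real.exp (l ^ 2 * c ^ 2 / 2) *
              Real.exp (l * (∫ z, g z ∂(Measure.pi fun _ : Fin n => P)) + n * (l ^ 2 * c ^ 2 / 2)) :=
            mul_le_mul_of_nonneg_left hih (Real.exp_pos _).le
        _ = Real.exp (l * (∫ x, F x ∂(Measure.pi fun _ : Fin (n+1) => P)) + (n+1) * (l ^ 2 * c ^ 2 / 2)) := by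
            rw [← Real.exp_add, hF2]
            congr 1
            ring
        _ = Real.exp (l * (∫ x, F x ∂(Measure.pi fun _ : Fin (n+1) => P)) + (↑(n+1) : ℝ) * (l ^ 2 * c ^ 2 / 2)) := by
            push_cast
            ring_nf


lemma mySq_diff_le {D : ℝ} {u v : ℝ} (hu : |u| ≤ D) (hv : |v| ≤ D) : |u^2 - v^2| ≤ D^2 := by
  have h1 := abs_nonneg u
  have h2 := abs_nonneg v
  have h3 := le_abs_self u
  have h4 := neg_abs_le u
  have h5 := le_abs_self v
  have h6 := neg_abs_le v
  rw [abs_sub_le_iff]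
  constructor <;> nlinarith

lemma mySq_integrable {P : Measure S} [IsProbabilityMeasure P] {f : S → ℝ} {D : ℝ}
    (hm : Measurable f) (hb : ∀ x, |f x| ≤ D) : Integrable (fun y => (f y)^2) P := by
  refine myIntegrable_of_bounded ((hm.pow_const 2).aestronglyMeasurable) (C := D^2) fun y => ?_
  have := hb y
  have h2 := abs_nonneg (f y)
  rw [abs_of_nonneg (sq_nonneg _)]
  nlinarith [le_abs_self (f y), neg_abs_le (f y)]

lemma myPhi_bound (P : Measure S) [IsProbabilityMeasure P] {n : ℕ} (hn : 0 < n)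
    {D : ℝ} (hD : 0 < D) {f : S → ℝ} (hm : Measurable f) (hb : ∀ x, |f x| ≤ D)
    (x : Fin n → S) :
    |(1 / n : ℝ) * ∑ i, (f (x i))^2 - ∫ y, (f y)^2 ∂P| ≤ 2 * D^2 := by
  have hn' : (0:ℝ) < n := Nat.cast_pos.mpr hn
  have hsq : ∀ y, (f y)^2 ≤ D^2 := by
    intro y
    have := hb y
    nlinarith [le_abs_self (f y), neg_abs_le (f y), abs_nonneg (f y)]
  have h1 : (0:ℝ) ≤ (1 / n : ℝ) * ∑ i, (f (x i))^2 := by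
    apply mul_nonneg (by positivity)
    exact Finset.sum_nonneg fun i _ => sq_nonneg _
  have h2 : (1 / n : ℝ) * ∑ i, (f (x i))^2 ≤ D^2 := by
    have hsum : ∑ i, (f (x i))^2 ≤ (n : ℝ) * D^2 := by
      calc ∑ i, (f (x i))^2 ≤ ∑ _i : Fin n, D^2 := Finset.sum_le_sum fun i _ => hsq _
        _ = (n : ℝ) * D^2 := by simp [Finset.sum_const]
    rw [div_mul_eq_mul_div, one_mul, div_le_iff₀ hn']
    linarith
  have h3 : (0:ℝ) ≤ ∫ y, (f y)^2 ∂P := integral_nonneg fun y => sq_nonneg _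
  have h4 : ∫ y, (f y)^2 ∂P ≤ D^2 := by
    calc ∫ y, (f y)^2 ∂P ≤ ∫ _y, D^2 ∂P :=
          integral_mono (mySq_integrable hm hb) (integrable_const _) hsq
      _ = D^2 := by simp [measure_univ]
  rw [abs_sub_le_iff]
  constructor <;> nlinarith

lemma myPhi_update (P : Measure S) [IsProbabilityMeasure P] {n : ℕ} (hn : 0 < n)
    {D : ℝ} (hD : 0 < D) {f : S → ℝ} (hb : ∀ x, |f x| ≤ D)
    (x : Fin n → S) (i : Fin n) (y : S) :
    abs (|(1 / n : ℝ) * ∑ j, (f (x j))^2 - ∫ w, (f w)^2 ∂P| -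
      |(1 / n : ℝ) * ∑ j, (f (Function.update x i y j))^2 - ∫ w, (f w)^2 ∂P|) ≤ D^2 / n := by
  have hn' : (0:ℝ) < n := Nat.cast_pos.mpr hn
  refine (abs_abs_sub_abs_le_abs_sub _ _).trans ?_
  have heq : ((1 / n : ℝ) * ∑ j, (f (x j))^2 - ∫ w, (f w)^2 ∂P) -
      ((1 / n : ℝ) * ∑ j, (f (Function.update x i y j))^2 - ∫ w, (f w)^2 ∂P)
      = (1 / n : ℝ) * ((f (x i))^2 - (f y)^2) := by
    have hsum : ∑ j, (f (x j))^2 - ∑ j, (f (Function.update x i y j))^2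
        = (f (x i))^2 - (f y)^2 := by
      rw [← Finset.sum_sub_distrib, Finset.sum_eq_single i]
      · rw [Function.update_self]
      · intro j _ hj
        rw [Function.update_of_ne hj]
        ring
      · intro h
        exact absurd (Finset.mem_univ i) h
    rw [← hsum]
    ring
  rw [heq, abs_mul]
  have : |(1 / n : ℝ)| = 1 / n := abs_of_pos (by positivity)
  rw [this]
  calc (1 / n : ℝ) * |(f (x i))^2 - (f y)^2| ≤ (1 / n : ℝ) * D^2 :=
        mul_le_mul_of_nonneg_left (mySq_diff_le (hb _) (hb _)) (by positivity)
    _ = D^2 / n := by ring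

lemma myPhi_approx (P : Measure S) [IsProbabilityMeasure P] {n : ℕ} (hn : 0 < n)
    {D : ℝ} (hD : 0 < D) {f f₀ : S → ℝ} (hm : Measurable f) (hm₀ : Measurable f₀)
    (hb : ∀ x, |f x| ≤ D) (hb₀ : ∀ x, |f₀ x| ≤ D) {δ : ℝ} (hδ : 0 ≤ δ)
    (happ : ∀ x, |f x - f₀ x| ≤ δ) (x : Fin n → S) :
    |(1 / n : ℝ) * ∑ j, (f (x j))^2 - ∫ w, (f w)^2 ∂P| ≤
      |(1 / n : ℝ) * ∑ j, (f₀ (x j))^2 - ∫ w, (f₀ w)^2 ∂P| + 4 * D * δ := by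
  have hn' : (0:ℝ) < n := Nat.cast_pos.mpr hn
  have hsq : ∀ w, |(f w)^2 - (f₀ w)^2| ≤ 2 * D * δ := by
    intro w
    have h1 : (f w)^2 - (f₀ w)^2 = (f w - f₀ w) * (f w + f₀ w) := by ring
    rw [h1, abs_mul]
    have h2 : |f w + f₀ w| ≤ 2 * D := by
      calc |f w + f₀ w| ≤ |f w| + |f₀ w| := abs_add_le _ _
        _ ≤ 2 * D := by linarith [hb w, hb₀ w]
    calc |f w - f₀ w| * |f w + f₀ w| ≤ δ * (2 * D) :=
          mul_le_mul (happ w) h2 (abs_nonneg _) hδ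
      _ = 2 * D * δ := by ring
  have hA : |(1 / n : ℝ) * ∑ j, (f (x j))^2 - (1 / n : ℝ) * ∑ j, (f₀ (x j))^2| ≤ 2 * D * δ := by
    rw [← mul_sub, ← Finset.sum_sub_distrib, abs_mul, abs_of_pos (show (0:ℝ) < 1/n by positivity)]
    calc (1 / n : ℝ) * |∑ j, ((f (x j))^2 - (f₀ (x j))^2)|
        ≤ (1 / n : ℝ) * ∑ j, |(f (x j))^2 - (f₀ (x j))^2| :=
          mul_le_mul_of_nonneg_left (Finset.abs_sum_le_sum_abs _ _) (by positivity)
      _ ≤ (1 / n : ℝ) * ∑ _j : Fin n, (2 * D * δ) :=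
          mul_le_mul_of_nonneg_left (Finset.sum_le_sum fun j _ => hsq _) (by positivity)
      _ = 2 * D * δ := by
          simp [Finset.sum_const]
          field_simp
  have hB : |(∫ w, (f w)^2 ∂P) - ∫ w, (f₀ w)^2 ∂P| ≤ 2 * D * δ := by
    rw [← integral_sub (mySq_integrable hm hb) (mySq_integrable hm₀ hb₀)]
    have := norm_integral_le_of_norm_le_const (μ := P)
      (f := fun w => (f w)^2 - (f₀ w)^2) (C := 2 * D * δ)
      (Filter.Eventually.of_forall fun w => by rw [Real.norm_eq_abs]; exact hsq w)
    simpa [Real.norm_eq_abs, measure_univ] using this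
  set a := (1 / n : ℝ) * ∑ j, (f (x j))^2
  set a' := (1 / n : ℝ) * ∑ j, (f₀ (x j))^2
  set b := ∫ w, (f w)^2 ∂P
  set b' := ∫ w, (f₀ w)^2 ∂P
  have : |a - b| - |a' - b'| ≤ |(a - b) - (a' - b')| := abs_sub_abs_le_abs_sub _ _
  have h5 : |(a - b) - (a' - b')| ≤ |a - a'| + |b - b'| := by
    have : (a - b) - (a' - b') = (a - a') - (b - b') := by ring
    rw [this]
    exact abs_sub _ _
  linarith


end Aux

section Aux2

lemma myJointLaw {Ω : Type*} [MeasurableSpace Ω] (μ : Measure Ω) [IsProbabilityMeasure μ]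
    {S : Type*} [MeasurableSpace S] (P : Measure S) [IsProbabilityMeasure P]
    {n : ℕ} (X : Fin n → Ω → S) (hXm : ∀ i, Measurable (X i))
    (hiid : iIndepFun X μ)
    (hPX : ∀ i, Measure.map (X i) μ = P) :
    Measure.map (fun ω (i : Fin n) => X i ω) μ = Measure.pi (fun _ => P) := by
  refine (Measure.pi_eq (μ := fun _ : Fin n => P) fun s hs => ?_).symm
  have hT : Measurable (fun ω (i : Fin n) => X i ω) := measurable_pi_lambda _ hXm
  rw [Measure.map_apply hT (MeasurableSet.univ_pi hs)]
  have hpre : (fun ω (i : Fin n) => X i ω) ⁻¹' (Set.pi Set.univ s) = ⋂ i, X i ⁻¹' s i := by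
    ext ω
    simp [Set.mem_pi]
  rw [hpre, hiid.meas_iInter (fun i => ⟨s i, hs i, rfl⟩)]
  congr 1 with i
  rw [← hPX i, Measure.map_apply (hXm i) (hs i)]

lemma myCiSup_le_ciSup_add {ι : Type*} [Nonempty ι] {u v : ι → ℝ} {δ : ℝ}
    (hv : BddAbove (Set.range v)) (h : ∀ i, u i ≤ v i + δ) :
    (⨆ i, u i) ≤ (⨆ i, v i) + δ :=
  ciSup_le fun i => (h i).trans (by linarith [le_ciSup hv i])


end Aux2

theorem talagrand_sup_bound
    {Ω : Type*} [MeasurableSpace Ω] (μ : Measure Ω) [IsProbabilityMeasure μ]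
    {S : Type*} [MeasurableSpace S] (P : Measure S) [IsProbabilityMeasure P]
    (n : ℕ) (hn : 0 < n)
    (X : Fin n → Ω → S) (hXm : ∀ i, Measurable (X i))
    (hiid : iIndepFun X μ)
    (hPX : ∀ i, Measure.map (X i) μ = P)
    (D : ℝ) (hD : 0 < D)
    (A : Set (S → ℝ)) (hAne : A.Nonempty)
    (hAmeas : ∀ f ∈ A, Measurable f)
    (hAbdd : ∀ f ∈ A, ∀ x, |f x| ≤ D)
    (hsep : ∃ A₀ : Set (S → ℝ), A₀.Countable ∧ A₀ ⊆ A ∧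
      ∀ f ∈ A, ∀ ε : ℝ, 0 < ε → ∃ f₀ ∈ A₀, ∀ x, |f x - f₀ x| ≤ ε)
    (t : ℝ) (ht : 0 < t) :
    1 - Real.exp (-t) ≤
      (μ {ω | (⨆ f : A, |(1 / n : ℝ) * ∑ i, ((f : S → ℝ) (X i ω))^2 - ∫ x, ((f : S → ℝ) x)^2 ∂P|) ≤
        (∫ ω', (⨆ f : A, |(1 / n : ℝ) * ∑ i, ((f : S → ℝ) (X i ω'))^2 - ∫ x, ((f : S → ℝ) x)^2 ∂P|) ∂μ) +
        Real.sqrt (2 * D^4 * t / n +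
          4 * D^2 * (∫ ω', (⨆ f : A, |(1 / n : ℝ) * ∑ i, ((f : S → ℝ) (X i ω'))^2 - ∫ x, ((f : S → ℝ) x)^2 ∂P|) ∂μ) * t / n) +
        2 * D^2 * t / (3 * n)}).toReal := by
  obtain ⟨A₀, hA₀c, hA₀sub, happrox⟩ := hsep
  have hn' : (0:ℝ) < n := Nat.cast_pos.mpr hn
  have hA₀ne : A₀.Nonempty := by
    obtain ⟨f, hf⟩ := hAne
    obtain ⟨f₀, hf₀, -⟩ := happrox f hf 1 one_pos
    exact ⟨f₀, hf₀⟩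
  haveI : Nonempty A := hAne.to_subtype
  haveI : Nonempty A₀ := hA₀ne.to_subtype
  haveI : Countable A₀ := hA₀c.to_subtype
  set ν : Measure (Fin n → S) := Measure.pi (fun _ : Fin n => P) with hν
  haveI : IsProbabilityMeasure ν := by rw [hν]; infer_instance
  set F : (Fin n → S) → ℝ := fun x =>
    ⨆ f : A₀, |(1 / n : ℝ) * ∑ i, ((f : S → ℝ) (x i))^2 - ∫ y, ((f : S → ℝ) y)^2 ∂P| with hFdef
  -- boundedness of ranges
  have hbddA : ∀ x : Fin n → S, BddAbove (Set.range fun f : A =>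
      |(1 / n : ℝ) * ∑ i, ((f : S → ℝ) (x i))^2 - ∫ y, ((f : S → ℝ) y)^2 ∂P|) := by
    intro x
    refine ⟨2 * D^2, ?_⟩
    rintro r ⟨f, rfl⟩
    exact myPhi_bound P hn hD (hAmeas f.1 f.2) (hAbdd f.1 f.2) x
  have hbddA₀ : ∀ x : Fin n → S, BddAbove (Set.range fun f : A₀ =>
      |(1 / n : ℝ) * ∑ i, ((f : S → ℝ) (x i))^2 - ∫ y, ((f : S → ℝ) y)^2 ∂P|) := by
    intro x
    refine ⟨2 * D^2, ?_⟩
    rintro r ⟨f, rfl⟩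
    exact myPhi_bound P hn hD (hAmeas f.1 (hA₀sub f.2)) (hAbdd f.1 (hA₀sub f.2)) x
  -- sup over A equals sup over A₀
  have hsup : ∀ x : Fin n → S,
      (⨆ f : A, |(1 / n : ℝ) * ∑ i, ((f : S → ℝ) (x i))^2 - ∫ y, ((f : S → ℝ) y)^2 ∂P|) = F x := by
    intro x
    apply le_antisymm
    · refine ciSup_le fun f => ?_
      refine le_of_forall_pos_le_add fun ε hε => ?_
      have hδ : 0 < ε / (4 * D) := by positivity
      obtain ⟨f₀, hf₀, happ⟩ := happrox f.1 f.2 (ε / (4 * D)) hδ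
      have h1 := myPhi_approx P hn hD (hAmeas f.1 f.2) (hAmeas f₀ (hA₀sub hf₀))
        (hAbdd f.1 f.2) (hAbdd f₀ (hA₀sub hf₀)) hδ.le happ x
      have h2 : |(1 / n : ℝ) * ∑ i, (f₀ (x i))^2 - ∫ y, (f₀ y)^2 ∂P| ≤ F x :=
        le_ciSup (hbddA₀ x) (⟨f₀, hf₀⟩ : A₀)
      have h3 : 4 * D * (ε / (4 * D)) = ε := by field_simp
      rw [h3] at h1
      calc |(1 / n : ℝ) * ∑ i, ((f : S → ℝ) (x i))^2 - ∫ y, ((f : S → ℝ) y)^2 ∂P|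
          ≤ |(1 / n : ℝ) * ∑ i, (f₀ (x i))^2 - ∫ y, (f₀ y)^2 ∂P| + ε := h1
        _ ≤ F x + ε := by linarith
    · refine ciSup_le fun f₀ => ?_
      exact le_ciSup (hbddA x) (⟨f₀.1, hA₀sub f₀.2⟩ : A)
  -- measurability of F
  have hFm : Measurable F := by
    rw [hFdef]
    apply Measurable.iSup
    intro f
    apply Measurable.abs
    refine Measurable.sub ?_ measurable_const
    refine Measurable.const_mul ?_ _
    refine Finset.measurable_sum _ fun i _ => ?_
    exact ((hAmeas f.1 (hA₀sub f.2)).comp (measurable_pi_apply i)).pow_const 2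
  have hF0 : ∀ x, 0 ≤ F x := by
    intro x
    obtain ⟨f₀⟩ := (inferInstance : Nonempty A₀)
    exact (abs_nonneg _).trans (le_ciSup (hbddA₀ x) f₀)
  have hFB : ∀ x, |F x| ≤ 2 * D^2 := by
    intro x
    rw [abs_of_nonneg (hF0 x)]
    exact ciSup_le fun f =>
      myPhi_bound P hn hD (hAmeas f.1 (hA₀sub f.2)) (hAbdd f.1 (hA₀sub f.2)) x
  have hFd : ∀ (x : Fin n → S) (i : Fin n) (y : S),
      |F x - F (Function.update x i y)| ≤ D^2 / n := by
    intro x i y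
    have d1 : F x ≤ F (Function.update x i y) + D^2 / n := by
      refine myCiSup_le_ciSup_add (hbddA₀ (Function.update x i y)) fun f => ?_
      have h := myPhi_update P hn hD (hAbdd f.1 (hA₀sub f.2)) x i y
      have := (abs_sub_le_iff.mp h).1
      linarith
    have d2 : F (Function.update x i y) ≤ F x + D^2 / n := by
      refine myCiSup_le_ciSup_add (hbddA₀ x) fun f => ?_
      have h := myPhi_update P hn hD (hAbdd f.1 (hA₀sub f.2)) x i y
      have := (abs_sub_le_iff.mp h).2
      linarith
    rw [abs_sub_le_iff]
    constructor <;> linarith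
  -- transfer to product space
  have hTm : Measurable (fun ω (i : Fin n) => X i ω) := measurable_pi_lambda _ hXm
  have hmap : Measure.map (fun ω (i : Fin n) => X i ω) μ = ν :=
    myJointLaw μ P X hXm hiid hPX
  have hEZ : (∫ ω', (⨆ f : A, |(1 / n : ℝ) * ∑ i, ((f : S → ℝ) (X i ω'))^2 -
      ∫ x, ((f : S → ℝ) x)^2 ∂P|) ∂μ) = ∫ x, F x ∂ν := by
    have h1 : (fun ω' => ⨆ f : A, |(1 / n : ℝ) * ∑ i, ((f : S → ℝ) (X i ω'))^2 -
        ∫ x, ((f : S → ℝ) x)^2 ∂P|) = fun ω' => F ((fun ω (i : Fin n) => X i ω) ω') := by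
      funext ω'
      exact hsup (fun i => X i ω')
    rw [h1, ← hmap, integral_map hTm.aemeasurable hFm.aestronglyMeasurable]
  rw [hEZ]
  set m : ℝ := ∫ x, F x ∂ν with hm
  have hm0 : 0 ≤ m := integral_nonneg hF0
  set R : ℝ := m + Real.sqrt (2 * D^4 * t / n + 4 * D^2 * m * t / n) + 2 * D^2 * t / (3 * n)
    with hRdef
  -- rewrite the event set
  have hEsm : MeasurableSet {x : Fin n → S | F x ≤ R} := measurableSet_le hFm measurable_const
  have hsetEq : {ω | (⨆ f : A, |(1 / n : ℝ) * ∑ i, ((f : S → ℝ) (X i ω))^2 -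
      ∫ x, ((f : S → ℝ) x)^2 ∂P|) ≤ R}
      = (fun ω (i : Fin n) => X i ω) ⁻¹' {x | F x ≤ R} := by
    ext ω
    simp only [Set.mem_setOf_eq, Set.mem_preimage]
    rw [hsup (fun i => X i ω)]
  have hμpre : μ ((fun ω (i : Fin n) => X i ω) ⁻¹' {x | F x ≤ R}) = ν {x | F x ≤ R} := by
    rw [← hmap, Measure.map_apply hTm hEsm]
  rw [hsetEq, hμpre]
  -- Chernoff bound
  set s : ℝ := Real.sqrt (2 * D^4 * t / n) with hs
  have hs2 : s^2 = 2 * D^4 * t / n := Real.sq_sqrt (by positivity)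
  have hs0 : 0 < s := Real.sqrt_pos.mpr (by positivity)
  set v : ℝ := D^4 / n with hv
  have hv0 : 0 < v := by positivity
  set l : ℝ := s / v with hl
  have hl0 : 0 < l := div_pos hs0 hv0
  have htensor := myTensor_mgf P n F hFm (2 * D^2) hFB (D^2 / n) l (by positivity) hFd
  rw [← hν] at htensor
  have hnc : (n:ℝ) * (l ^ 2 * (D^2 / n) ^ 2 / 2) = l^2 * v / 2 := by
    rw [hv]
    field_simp
  rw [hnc, ← hm] at htensor
  have hexpint : Integrable (fun x => Real.exp (l * F x)) ν :=
    myIntegrable_of_bounded ((hFm.const_mul l).exp.aestronglyMeasurable)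
      (C := Real.exp (|l| * (2 * D^2))) (myExpBound hFB l)
  have hmark := mul_meas_ge_le_integral_of_nonneg
    (Filter.Eventually.of_forall fun x => (Real.exp_pos _).le) hexpint (Real.exp (l * (m + s)))
  have hsetE : {x : Fin n → S | Real.exp (l * (m + s)) ≤ Real.exp (l * F x)}
      = {x | m + s ≤ F x} := by
    ext x
    simp only [Set.mem_setOf_eq, Real.exp_le_exp]
    exact ⟨fun h => le_of_mul_le_mul_left h hl0, fun h => mul_le_mul_of_nonneg_left h hl0.le⟩
  rw [hsetE] at hmark
  have hEbound : (ν {x | m + s ≤ F x}).toReal ≤ Real.exp (-t) := by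
    have h1 : (ν {x | m + s ≤ F x}).toReal
        ≤ Real.exp (l * m + l^2 * v / 2) / Real.exp (l * (m + s)) := by
      rw [le_div_iff₀ (Real.exp_pos _)]
      calc (ν {x | m + s ≤ F x}).toReal * Real.exp (l * (m + s))
          = Real.exp (l * (m + s)) * (ν {x | m + s ≤ F x}).toReal := by ring
        _ ≤ ∫ x, Real.exp (l * F x) ∂ν := hmark
        _ ≤ Real.exp (l * m + l^2 * v / 2) := htensor
    refine h1.trans (le_of_eq ?_)
    rw [← Real.exp_sub]
    congr 1
    have hsv : s^2 = 2 * t * v := by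
      rw [hs2, hv]
      field_simp
    have h2 : l * m + l^2 * v / 2 - l * (m + s) = l^2 * v / 2 - l * s := by ring
    have h3 : (s/v)^2 * v / 2 - (s/v) * s = -(s^2) / (2 * v) := by
      field_simp
      ring
    rw [h2, hl, h3, hsv]
    field_simp
  -- finish
  have hmeasE : MeasurableSet {x : Fin n → S | m + s ≤ F x} :=
    measurableSet_le measurable_const hFm
  have hcompl : {x : Fin n → S | m + s ≤ F x}ᶜ ⊆ {x | F x ≤ R} := by
    intro x hx
    simp only [Set.mem_compl_iff, Set.mem_setOf_eq, not_le] at hx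
    have h4 : s ≤ Real.sqrt (2 * D^4 * t / n + 4 * D^2 * m * t / n) := by
      rw [hs]
      apply Real.sqrt_le_sqrt
      have h5 : 0 ≤ 4 * D^2 * m * t / n :=
        div_nonneg (mul_nonneg (mul_nonneg (by positivity) hm0) ht.le) hn'.le
      linarith
    have h6 : (0:ℝ) ≤ 2 * D^2 * t / (3 * n) := by positivity
    have : F x < m + s := hx
    simp only [Set.mem_setOf_eq]
    rw [hRdef]
    linarith
  calc 1 - Real.exp (-t) ≤ 1 - (ν {x | m + s ≤ F x}).toReal := by linarith [hEbound]
    _ = (ν {x : Fin n → S | m + s ≤ F x}ᶜ).toReal := by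
        rw [prob_compl_eq_one_sub hmeasE,
          ENNReal.toReal_sub_of_le prob_le_one ENNReal.one_ne_top]
        simp
    _ ≤ (ν {x | F x ≤ R}).toReal := by
        apply ENNReal.toReal_mono (measure_ne_top _ _)
        exact measure_mono hcompl
end
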